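/- arXiv:2205.08035 — 8 statements merged into one kernel-verified Lean document; each statement's English description precedes it below -/
import Mathlib

section
/- For Λ > 0, the function σ ↦ h(σ,Λ) on (0,∞) is strictly increasing on (0, σ*) and strictly decreasing on (σ*, ∞), where σ* = (-3 + √(9 + 4Λ²))/2 is the unique positive root of Λ² - 3σ - σ² = 0; in particular σ* is the unique maximizer of h(·,Λ). -/
open Real MeasureTheory Set Filter Topology

noncomputable def fph (σ x : ℝ) : ℝ :=
  x * Real.exp (-(x - σ)^2 / (2*σ)) / Real.sqrt (2*Real.pi*σ^3)

noncomputable def erfc (z : ℝ) : ℝ :=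
  (2 / Real.sqrt Real.pi) * ∫ t in Set.Ioi z, Real.exp (-t^2)

noncomputable def fpH (σ x : ℝ) : ℝ :=
  (1/2) * (erfc ((x-σ)/Real.sqrt (2*σ)) + Real.exp (2*x) * erfc ((x+σ)/Real.sqrt (2*σ)))

noncomputable def kap (σ y x : ℝ) : ℝ :=
  Real.exp (-(y - x + σ)^2/(2*σ)) / Real.sqrt (2*Real.pi*σ) * (1 - Real.exp (-(2*x*y)/σ))

theorem fph_monotonicity (Λ : ℝ) (hΛ : 0 < Λ) :
    (Λ^2 - 3*((-3 + Real.sqrt (9 + 4*Λ^2))/2) - ((-3 + Real.sqrt (9 + 4*Λ^2))/2)^2 = 0) ∧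
    (0 < (-3 + Real.sqrt (9 + 4*Λ^2))/2) ∧
    StrictMonoOn (fun σ => fph σ Λ) (Set.Ioc 0 ((-3 + Real.sqrt (9 + 4*Λ^2))/2)) ∧
    StrictAntiOn (fun σ => fph σ Λ) (Set.Ici ((-3 + Real.sqrt (9 + 4*Λ^2))/2)) ∧
    (∀ σ, 0 < σ → σ ≠ (-3 + Real.sqrt (9 + 4*Λ^2))/2 →
      fph σ Λ < fph ((-3 + Real.sqrt (9 + 4*Λ^2))/2) Λ) := by
  set s := (-3 + Real.sqrt (9 + 4*Λ^2))/2 with hs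
  have h9 : (0:ℝ) ≤ 9 + 4*Λ^2 := by positivity
  have hsq : Real.sqrt (9 + 4*Λ^2) ^ 2 = 9 + 4*Λ^2 := Real.sq_sqrt h9
  have hsgt : 3 < Real.sqrt (9 + 4*Λ^2) := by
    nlinarith [Real.sqrt_nonneg (9 + 4*Λ^2), hsq, sq_nonneg Λ, hΛ]
  have hspos : 0 < s := by rw [hs]; linarith
  have hroot : Λ^2 - 3*s - s^2 = 0 := by rw [hs]; nlinarith [hsq]
  set F : ℝ → ℝ := fun σ => Λ - (Λ^2/2) * σ⁻¹ - σ/2 - (3/2)*Real.log σ - (1/2)*Real.log (2*Real.pi) with hF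
  have h2π : (0:ℝ) < 2*Real.pi := by positivity
  have key : ∀ σ, 0 < σ → fph σ Λ = Λ * Real.exp (F σ) := by
    intro σ hσ
    have hE : Real.exp ((1/2)*Real.log (2*Real.pi) + (3/2)*Real.log σ) ^ 2 = 2*Real.pi*σ^3 := by
      rw [sq, ← Real.exp_add,
        show (1/2)*Real.log (2*Real.pi) + (3/2)*Real.log σ + ((1/2)*Real.log (2*Real.pi) + (3/2)*Real.log σ)
          = Real.log (2*Real.pi) + (Real.log σ + Real.log σ + Real.log σ) by ring,
        Real.exp_add, Real.exp_add, Real.exp_add, Real.exp_log h2π, Real.exp_log hσ]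
      ring
    have hL : Real.sqrt (2*Real.pi*σ^3)
        = Real.exp ((1/2)*Real.log (2*Real.pi) + (3/2)*Real.log σ) := by
      rw [← hE, Real.sqrt_sq (Real.exp_pos _).le]
    simp only [fph, hL, mul_div_assoc, ← Real.exp_sub]
    congr 1
    simp only [hF, inv_eq_one_div]
    field_simp
    ring
  have hderiv : ∀ σ, 0 < σ → HasDerivAt F ((Λ^2 - 3*σ - σ^2)/(2*σ^2)) σ := by
    intro σ hσ
    have h1 : HasDerivAt (fun x : ℝ => (Λ^2/2) * x⁻¹) ((Λ^2/2) * (-(σ^2)⁻¹)) σ :=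
      (hasDerivAt_inv hσ.ne').const_mul _
    have h2 : HasDerivAt (fun x : ℝ => (3/2)*Real.log x) ((3/2) * σ⁻¹) σ :=
      (Real.hasDerivAt_log hσ.ne').const_mul _
    have h3 : HasDerivAt (fun x : ℝ => x/2) (1/2 : ℝ) σ := by
      simpa using (hasDerivAt_id σ).div_const 2
    have := ((((hasDerivAt_const σ Λ).sub h1).sub h3).sub h2).sub
      (hasDerivAt_const σ ((1/2)*Real.log (2*Real.pi)))
    convert this using 1
    · rfl
    · rfl
    · rfl
    field_simp
    ring
  have hFmono : StrictMonoOn F (Set.Ioc 0 s) := by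
    apply strictMonoOn_of_deriv_pos (convex_Ioc 0 s)
    · intro x hx
      exact (hderiv x hx.1).differentiableAt.continuousAt.continuousWithinAt
    · intro x hx
      rw [interior_Ioc] at hx
      rw [(hderiv x hx.1).deriv]
      have hnum : 0 < Λ^2 - 3*x - x^2 := by nlinarith [hx.1, hx.2]
      exact div_pos hnum (mul_pos two_pos (pow_pos hx.1 2))
  have hFanti : StrictAntiOn F (Set.Ici s) := by
    apply strictAntiOn_of_deriv_neg (convex_Ici s)
    · intro x hx
      exact (hderiv x (lt_of_lt_of_le hspos hx)).differentiableAt.continuousAt.continuousWithinAt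
    · intro x hx
      rw [interior_Ici] at hx
      have hx0 : 0 < x := hspos.trans hx
      rw [(hderiv x hx0).deriv]
      have hnum : Λ^2 - 3*x - x^2 < 0 := by
        have h3 := mul_pos (sub_pos.mpr hx) (show (0:ℝ) < 3 + x + s by linarith)
        nlinarith
      exact div_neg_of_neg_of_pos hnum (mul_pos two_pos (pow_pos hx0 2))
  have hmono : StrictMonoOn (fun σ => fph σ Λ) (Set.Ioc 0 s) := by
    intro a ha b hb hab
    simp only
    rw [key a ha.1, key b hb.1]
    exact mul_lt_mul_of_pos_left (Real.exp_lt_exp.mpr (hFmono ha hb hab)) hΛ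
  have hanti : StrictAntiOn (fun σ => fph σ Λ) (Set.Ici s) := by
    intro a ha b hb hab
    simp only
    rw [key a (lt_of_lt_of_le hspos ha), key b (lt_of_lt_of_le hspos hb)]
    exact mul_lt_mul_of_pos_left (Real.exp_lt_exp.mpr (hFanti ha hb hab)) hΛ
  refine ⟨hroot, hspos, hmono, hanti, ?_⟩
  intro σ hσ hne
  rcases lt_or_gt_of_ne hne with h | h
  · exact hmono ⟨hσ, h.le⟩ ⟨hspos, le_refl s⟩ h
  · exact hanti (le_refl s) h.le h
end

section
/- For every x > 0, the function σ ↦ H(σ,x) = (1/2)(Erfc((x-σ)/√(2σ)) + e^{2x}·Erfc((x+σ)/√(2σ))) defined on (0,∞) is differentiable in σ with derivative ∂_σ H(σ,x) = h(σ,x) = x·exp(-(x-σ)²/(2σ))/√(2πσ³). -/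
open Real MeasureTheory Set Filter Topology

lemma intIoi_hasDerivAt (z : ℝ) :
    HasDerivAt (fun z : ℝ => ∫ t in Set.Ioi z, Real.exp (-t^2)) (-Real.exp (-z^2)) z := by
  have cont : Continuous fun t : ℝ => Real.exp (-t^2) := by continuity
  have hint : Integrable (fun t : ℝ => Real.exp (-t^2)) := by
    have := integrable_exp_neg_mul_sq (b := 1) one_pos
    simpa using this
  have heq : ∀ w : ℝ, (∫ t in Set.Ioi w, Real.exp (-t^2)) =
      (∫ t, Real.exp (-t^2)) - (∫ t in Set.Iic (0:ℝ), Real.exp (-t^2)) - ∫ t in (0:ℝ)..w, Real.exp (-t^2) := by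
    intro w
    have h1 : (∫ t in Set.Iic w, Real.exp (-t^2)) + (∫ t in Set.Ioi w, Real.exp (-t^2)) = ∫ t, Real.exp (-t^2) := by
      have := integral_add_compl (measurableSet_Iic (a := w)) hint
      simpa [compl_Iic] using this
    have h2 : (∫ t in Set.Iic w, Real.exp (-t^2)) - (∫ t in Set.Iic (0:ℝ), Real.exp (-t^2)) = ∫ t in (0:ℝ)..w, Real.exp (-t^2) :=
      intervalIntegral.integral_Iic_sub_Iic hint.integrableOn hint.integrableOn
    linarith
  have hd : HasDerivAt (fun w : ℝ => ∫ t in (0:ℝ)..w, Real.exp (-t^2)) (Real.exp (-z^2)) z :=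
    intervalIntegral.integral_hasDerivAt_right (cont.intervalIntegrable 0 z)
      cont.aestronglyMeasurable.stronglyMeasurableAtFilter cont.continuousAt
  have h3 := (hasDerivAt_const z ((∫ t, Real.exp (-t^2)) - (∫ t in Set.Iic (0:ℝ), Real.exp (-t^2)))).sub hd
  simp only [zero_sub] at h3
  have hfun : (fun z : ℝ => ∫ t in Set.Ioi z, Real.exp (-t^2)) =
      (fun w => ((∫ t, Real.exp (-t^2)) - (∫ t in Set.Iic (0:ℝ), Real.exp (-t^2))) - ∫ t in (0:ℝ)..w, Real.exp (-t^2)) := by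
    funext w; rw [heq w]
  rw [hfun]
  exact h3

lemma erfc_hasDerivAt (z : ℝ) :
    HasDerivAt erfc (-(2 / Real.sqrt Real.pi) * Real.exp (-z^2)) z := by
  have := (intIoi_hasDerivAt z).const_mul (2 / Real.sqrt Real.pi)
  unfold erfc
  simpa [mul_comm, mul_assoc, mul_neg, neg_mul] using this

theorem fpH_hasDerivAt (x : ℝ) (hx : 0 < x) (σ : ℝ) (hσ : 0 < σ) :
    HasDerivAt (fun s => fpH s x) (fph σ x) σ := by
  set u := Real.sqrt (2*σ) with hu_def
  have hu : 0 < u := Real.sqrt_pos.mpr (by linarith)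
  have hu2 : u^2 = 2*σ := Real.sq_sqrt (by linarith)
  -- derivative of s ↦ √(2s) at σ
  have hus : HasDerivAt (fun s : ℝ => Real.sqrt (2*s)) (1/u) σ := by
    have h1 : HasDerivAt (fun s : ℝ => 2*s) 2 σ := by
      simpa using (hasDerivAt_id σ).const_mul 2
    have h2 := (Real.hasDerivAt_sqrt (by positivity : (2:ℝ)*σ ≠ 0)).comp σ h1
    convert h2 using 1
    rfl
    rfl
    rfl
    rw [← hu_def]
    field_simp
  -- derivative of z₁
  have hz1 : HasDerivAt (fun s : ℝ => (x - s)/Real.sqrt (2*s)) (-(x+σ)/u^3) σ := by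
    have hnum : HasDerivAt (fun s : ℝ => x - s) (-1) σ := by
      exact (hasDerivAt_id' σ).const_sub x
    have := hnum.div hus (by positivity)
    convert this using 1
    rfl
    rfl
    rfl
    rw [← hu_def]
    field_simp
    linear_combination hu2
  -- derivative of z₂
  have hz2 : HasDerivAt (fun s : ℝ => (x + s)/Real.sqrt (2*s)) ((σ - x)/u^3) σ := by
    have hnum : HasDerivAt (fun s : ℝ => x + s) 1 σ := by
      exact (hasDerivAt_id' σ).const_add x
    have := hnum.div hus (by positivity)
    convert this using 1
    rfl
    rfl
    rfl
    rw [← hu_def]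
    field_simp
    linear_combination (-1) * hu2
  set z1 := (x - σ)/u with hz1_def
  set z2 := (x + σ)/u with hz2_def
  have he1 : HasDerivAt (fun s => erfc ((x - s)/Real.sqrt (2*s)))
      ((-(2 / Real.sqrt Real.pi) * Real.exp (-z1^2)) * (-(x+σ)/u^3)) σ :=
    (erfc_hasDerivAt z1).comp (h₂ := erfc) σ hz1
  have he2 : HasDerivAt (fun s => erfc ((x + s)/Real.sqrt (2*s)))
      ((-(2 / Real.sqrt Real.pi) * Real.exp (-z2^2)) * ((σ - x)/u^3)) σ :=
    (erfc_hasDerivAt z2).comp (h₂ := erfc) σ hz2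
  have hH : HasDerivAt (fun s => fpH s x)
      ((1/2) * ((-(2 / Real.sqrt Real.pi) * Real.exp (-z1^2)) * (-(x+σ)/u^3)
        + Real.exp (2*x) * ((-(2 / Real.sqrt Real.pi) * Real.exp (-z2^2)) * ((σ - x)/u^3)))) σ := by
    have := (he1.add (he2.const_mul (Real.exp (2*x)))).const_mul (1/2)
    simpa [fpH] using this
  convert hH using 1
  -- algebra
  have hπ : (0:ℝ) < Real.pi := Real.pi_pos
  have hz1sq : z1^2 = (x-σ)^2/(2*σ) := by
    rw [hz1_def, div_pow, hu2]
  have hz2sq : z2^2 = (x+σ)^2/(2*σ) := by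
    rw [hz2_def, div_pow, hu2]
  have hexp2 : Real.exp (2*x) * Real.exp (-z2^2) = Real.exp (-(x-σ)^2/(2*σ)) := by
    rw [← Real.exp_add, hz2sq]
    congr 1
    field_simp
    ring
  have hsqrt : Real.sqrt (2*Real.pi*σ^3) = Real.sqrt Real.pi * u^3 / 2 := by
    have h1 : (Real.sqrt Real.pi * u^3 / 2)^2 = 2*Real.pi*σ^3 := by
      rw [div_pow, mul_pow, Real.sq_sqrt hπ.le]
      linear_combination (Real.pi/4*(u^4+2*σ*u^2+4*σ^2)) * hu2
    rw [← h1, Real.sqrt_sq (by positivity)]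
  rw [fph, hz1sq] at *
  rw [hsqrt]
  have hsπ : (0:ℝ) < Real.sqrt Real.pi := Real.sqrt_pos.mpr hπ
  field_simp
  rw [show -((x - σ) ^ 2 / (σ * 2)) = -(x - σ) ^ 2 / (2 * σ) by ring, show x * 2 = 2 * x by ring]
  linear_combination (σ-x) * hexp2
end

section
/- For every Λ > 0, the hazard rate of the first-passage distribution converges to 1/2 at infinity: lim_{σ→∞} h(σ,Λ)/(1 - H(σ,Λ)) = 1/2. -/
open Real MeasureTheory Set Filter Topology

-- shift lemma
lemma shiftIoi (f : ℝ → ℝ) (c : ℝ) :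
    ∫ t in Ioi c, f t = ∫ u in Ioi (0:ℝ), f (u + c) := by
  have h1 : ∫ u in Ioi (0:ℝ), f (u + c)
      = ∫ u, (Ioi (0:ℝ)).indicator (fun u => f (u + c)) u := by
    rw [integral_indicator measurableSet_Ioi]
  have h2 : (fun u => (Ioi (0:ℝ)).indicator (fun u => f (u + c)) u)
      = fun u => (Ioi c).indicator f (u + c) := by
    funext u
    by_cases h : u ∈ Ioi (0:ℝ)
    · rw [indicator_of_mem h, indicator_of_mem (by simpa using h)]
    · rw [indicator_of_notMem h, indicator_of_notMem (by simpa using h)]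
  rw [h1, h2, integral_add_right_eq_self ((Ioi c).indicator f) c,
    integral_indicator measurableSet_Ioi]

lemma gauss_integrable : Integrable (fun t : ℝ => Real.exp (-t^2)) := by
  have := integrable_exp_neg_mul_sq (one_pos)
  simpa using this

lemma Jneg (z : ℝ) :
    (∫ t in Ioi (-z), Real.exp (-t^2)) = Real.sqrt Real.pi - ∫ t in Ioi z, Real.exp (-t^2) := by
  have h1 : (∫ t in Ioi (-z), Real.exp (-t^2)) = ∫ t in Iic z, Real.exp (-t^2) := by
    rw [← integral_comp_neg_Iic z (fun t => Real.exp (-t^2))]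
    congr 1
    funext t
    ring_nf
  have h2 : (∫ t in Iic z, Real.exp (-t^2)) + ∫ t in Ioi z, Real.exp (-t^2)
      = ∫ t : ℝ, Real.exp (-t^2) := by
    exact intervalIntegral.integral_Iic_add_Ioi gauss_integrable.integrableOn gauss_integrable.integrableOn
  have h3 : (∫ t : ℝ, Real.exp (-t^2)) = Real.sqrt Real.pi := by
    have := integral_gaussian 1
    simpa using this
  linarith [h1, h2, h3]

lemma erfc_neg (z : ℝ) : erfc (-z) = 2 - erfc z := by
  have hπ : Real.sqrt Real.pi ≠ 0 := by positivity
  rw [erfc, erfc, Jneg]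
  field_simp

lemma int_u_exp {c : ℝ} (hc : 0 < c) :
    ∫ u in Ioi (0:ℝ), u * Real.exp (-(c*u)) = 1/c^2 := by
  have h := Real.integral_rpow_mul_exp_neg_mul_Ioi (a := 2) (r := c) two_pos hc
  rw [show ((2:ℝ) - 1) = 1 by norm_num] at h
  simp_rw [Real.rpow_one] at h
  rw [h, Real.Gamma_two]
  rw [show ((2:ℝ)) = ((2:ℕ):ℝ) by norm_num, Real.rpow_natCast]
  field_simp

lemma int_u3_exp {c : ℝ} (hc : 0 < c) :
    ∫ u in Ioi (0:ℝ), u^3 * Real.exp (-(c*u)) = 6/c^4 := by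
  have h := Real.integral_rpow_mul_exp_neg_mul_Ioi (a := 4) (r := c) (by norm_num) hc
  rw [show ((4:ℝ) - 1) = ((3:ℕ):ℝ) by norm_num] at h
  simp_rw [Real.rpow_natCast] at h
  rw [h]
  have hΓ : Real.Gamma 4 = 6 := by
    rw [show (4:ℝ) = ((3:ℕ):ℝ) + 1 by norm_num, Real.Gamma_nat_eq_factorial]
    simp [Nat.factorial]
  rw [hΓ, show ((4:ℝ)) = ((4:ℕ):ℝ) by norm_num, Real.rpow_natCast]
  field_simp

lemma integrableOn_u_exp {c : ℝ} (hc : 0 < c) :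
    IntegrableOn (fun u : ℝ => u * Real.exp (-(c*u))) (Ioi 0) := by
  have h := integrableOn_rpow_mul_exp_neg_mul_rpow (s := 1) (p := 1) (b := c)
    (by norm_num) one_pos hc
  simp_rw [Real.rpow_one] at h
  simpa [neg_mul] using h

lemma integrableOn_u3_exp {c : ℝ} (hc : 0 < c) :
    IntegrableOn (fun u : ℝ => u^3 * Real.exp (-(c*u))) (Ioi 0) := by
  have h := integrableOn_rpow_mul_exp_neg_mul_rpow (s := 3) (p := 1) (b := c)
    (by norm_num) one_pos hc
  simp_rw [Real.rpow_one, show ((3:ℝ)) = ((3:ℕ):ℝ) by norm_num, Real.rpow_natCast] at h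
  simpa [neg_mul] using h

lemma integrableOn_exp_quad {c : ℝ} (hc : 0 < c) :
    IntegrableOn (fun u : ℝ => Real.exp (-u^2 - 2*c*u)) (Ioi 0) := by
  refine Integrable.mono' (exp_neg_integrableOn_Ioi 0 (by linarith : (0:ℝ) < 2*c))
    (Continuous.aestronglyMeasurable (by continuity)) ?_
  filter_upwards with u
  rw [Real.norm_eq_abs, abs_of_pos (Real.exp_pos _)]
  apply Real.exp_le_exp.2
  nlinarith [sq_nonneg u]

set_option maxHeartbeats 1000000 in
lemma key (Λ σ : ℝ) (hΛ : 0 < Λ) (h3 : 3 ≤ σ) (h2 : 2*Λ ≤ σ) :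
    (σ-Λ)^2/(2*σ^2) ≤ fph σ Λ / (1 - fpH σ Λ) ∧
    fph σ Λ / (1 - fpH σ Λ) ≤ (σ+Λ)^4/(2*σ^2*((σ+Λ)^2 - 3*σ)) := by
  have hσ0 : (0:ℝ) < σ := by linarith
  have hσΛ : Λ < σ := by linarith
  set s := Real.sqrt (2*σ) with hs
  have hs0 : 0 < s := Real.sqrt_pos.2 (by linarith)
  have hs2 : s^2 = 2*σ := Real.sq_sqrt (by linarith)
  set a := (σ-Λ)/s with ha
  set b := (σ+Λ)/s with hb
  set δ := 2*Λ/s with hδ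
  have ha0 : 0 < a := div_pos (by linarith) hs0
  have hb0 : 0 < b := div_pos (by linarith) hs0
  have hδ0 : 0 < δ := div_pos (by linarith) hs0
  have hba : b = a + δ := by rw [ha, hb, hδ]; ring
  have ha2 : a^2 = (σ-Λ)^2/(2*σ) := by rw [ha, div_pow, hs2]
  have hb2 : b^2 = (σ+Λ)^2/(2*σ) := by rw [hb, div_pow, hs2]
  have hab2 : b^2 - a^2 = 2*Λ := by
    rw [ha2, hb2]; field_simp; ring
  set P := ∫ u in Ioi (0:ℝ), Real.exp (-u^2 - 2*a*u) with hP
  set Q := ∫ u in Ioi (0:ℝ), Real.exp (-u^2 - 2*b*u) with hQ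
  have hπ : (0:ℝ) < Real.sqrt Real.pi := Real.sqrt_pos.2 Real.pi_pos
  have hshift : ∀ c : ℝ, (∫ t in Ioi c, Real.exp (-t^2))
      = Real.exp (-c^2) * ∫ u in Ioi (0:ℝ), Real.exp (-u^2 - 2*c*u) := by
    intro c
    rw [shiftIoi (fun t => Real.exp (-t^2)) c, ← integral_const_mul]
    congr 1
    funext u
    rw [← Real.exp_add]
    congr 1
    ring
  have hfpH2 : 1 - fpH σ Λ = Real.exp (-a^2) * (P - Q) / Real.sqrt Real.pi := by
    have e1 : (Λ-σ)/Real.sqrt (2*σ) = -a := by rw [ha, ← hs]; field_simp; ring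
    have e2 : (Λ+σ)/Real.sqrt (2*σ) = b := by rw [hb, ← hs]; ring_nf
    rw [fpH, e1, e2, erfc_neg, erfc, erfc, hshift a, hshift b, ← hP, ← hQ]
    have eab : Real.exp (2*Λ) * Real.exp (-b^2) = Real.exp (-a^2) := by
      rw [← Real.exp_add]; congr 1; linarith
    field_simp
    linear_combination (-Q) * eab
  have h2a : (0:ℝ) < 2*a := by linarith
  have h2b : (0:ℝ) < 2*b := by linarith
  have hPQint : P - Q = ∫ u in Ioi (0:ℝ),
      (Real.exp (-u^2 - 2*a*u) - Real.exp (-u^2 - 2*b*u)) := by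
    rw [hP, hQ, ← integral_sub (integrableOn_exp_quad ha0) (integrableOn_exp_quad hb0)]
  have hpt1 : ∀ u ∈ Ioi (0:ℝ), Real.exp (-u^2 - 2*a*u) - Real.exp (-u^2 - 2*b*u)
      ≤ 2*δ*(u*Real.exp (-(2*a*u))) := by
    intro u hu
    have hu0 : 0 ≤ u := le_of_lt hu
    have e : Real.exp (-u^2 - 2*b*u) = Real.exp (-u^2 - 2*a*u) * Real.exp (-(2*δ*u)) := by
      rw [hba, ← Real.exp_add]; ring_nf
    have h1 : 1 - Real.exp (-(2*δ*u)) ≤ 2*δ*u := by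
      have := Real.add_one_le_exp (-(2*δ*u)); linarith
    have hh2 : 0 ≤ 1 - Real.exp (-(2*δ*u)) := by
      have : Real.exp (-(2*δ*u)) ≤ 1 := by
        rw [← Real.exp_zero]
        exact Real.exp_le_exp.2 (by linarith [mul_nonneg hδ0.le hu0])
      linarith
    have hh3 : Real.exp (-u^2 - 2*a*u) ≤ Real.exp (-(2*a*u)) :=
      Real.exp_le_exp.2 (by linarith [sq_nonneg u])
    calc Real.exp (-u^2 - 2*a*u) - Real.exp (-u^2 - 2*b*u)
        = Real.exp (-u^2 - 2*a*u) * (1 - Real.exp (-(2*δ*u))) := by rw [e]; ring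
      _ ≤ Real.exp (-(2*a*u)) * (2*δ*u) := mul_le_mul hh3 h1 hh2 (Real.exp_pos _).le
      _ = 2*δ*(u*Real.exp (-(2*a*u))) := by ring
  have hpt2 : ∀ u ∈ Ioi (0:ℝ),
      2*δ*(u*Real.exp (-(2*b*u))) - 2*δ*(u^3*Real.exp (-(2*b*u)))
      ≤ Real.exp (-u^2 - 2*a*u) - Real.exp (-u^2 - 2*b*u) := by
    intro u hu
    have hu0 : 0 ≤ u := le_of_lt hu
    have e : Real.exp (-u^2 - 2*a*u)
        = Real.exp (-u^2) * Real.exp (-(2*b*u)) * Real.exp (2*δ*u) := by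
      rw [hba, ← Real.exp_add, ← Real.exp_add]; ring_nf
    have e' : Real.exp (-u^2 - 2*b*u) = Real.exp (-u^2) * Real.exp (-(2*b*u)) := by
      rw [← Real.exp_add]; ring_nf
    have hX1 : 1 - u^2 ≤ Real.exp (-u^2) := by
      have := Real.add_one_le_exp (-u^2); linarith
    have hE : 2*δ*u + 1 ≤ Real.exp (2*δ*u) := by
      have := Real.add_one_le_exp (2*δ*u); linarith
    have hX0 : 0 < Real.exp (-u^2) := Real.exp_pos _
    have hY0 : 0 < Real.exp (-(2*b*u)) := Real.exp_pos _
    rw [e, e']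
    rcases le_or_gt (u^2) 1 with hc | hc
    · have k1 : (1-u^2)*(2*δ*u) ≤ Real.exp (-u^2) * (Real.exp (2*δ*u) - 1) :=
        mul_le_mul hX1 (by linarith) (by linarith [mul_nonneg hδ0.le hu0]) hX0.le
      linarith [mul_le_mul_of_nonneg_left k1 hY0.le]
    · have hE1 : (0:ℝ) ≤ Real.exp (2*δ*u) - 1 := by
        linarith [hE, mul_nonneg hδ0.le hu0]
      have k2 : (0:ℝ) ≤ Real.exp (-u^2) * Real.exp (-(2*b*u)) * (Real.exp (2*δ*u) - 1) := by
        positivity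
      have k3 : (0:ℝ) ≤ 2*δ*Real.exp (-(2*b*u))*(u*(u^2-1)) := by
        have : (0:ℝ) ≤ u^2 - 1 := by linarith
        positivity
      linarith [k2, k3]
  have hKup : P - Q ≤ δ/(2*a^2) := by
    rw [hPQint]
    calc (∫ u in Ioi (0:ℝ), (Real.exp (-u^2 - 2*a*u) - Real.exp (-u^2 - 2*b*u)))
        ≤ ∫ u in Ioi (0:ℝ), 2*δ*(u*Real.exp (-(2*a*u))) :=
          setIntegral_mono_on ((integrableOn_exp_quad ha0).sub (integrableOn_exp_quad hb0))
            ((integrableOn_u_exp h2a).const_mul (2*δ)) measurableSet_Ioi hpt1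
      _ = 2*δ*(1/(2*a)^2) := by rw [integral_const_mul, int_u_exp h2a]
      _ = δ/(2*a^2) := by field_simp
  have hKlo : δ*(2*b^2-3)/(4*b^4) ≤ P - Q := by
    rw [hPQint]
    calc δ*(2*b^2-3)/(4*b^4)
        = 2*δ*(1/(2*b)^2) - 2*δ*(6/(2*b)^4) := by field_simp; ring
      _ = ∫ u in Ioi (0:ℝ),
            (2*δ*(u*Real.exp (-(2*b*u))) - 2*δ*(u^3*Real.exp (-(2*b*u)))) := by
          rw [integral_sub ((integrableOn_u_exp h2b).const_mul (2*δ))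
            ((integrableOn_u3_exp h2b).const_mul (2*δ)),
            integral_const_mul, integral_const_mul, int_u_exp h2b, int_u3_exp h2b]
      _ ≤ _ :=
          setIntegral_mono_on
            (((integrableOn_u_exp h2b).const_mul (2*δ)).sub
              ((integrableOn_u3_exp h2b).const_mul (2*δ)))
            ((integrableOn_exp_quad ha0).sub (integrableOn_exp_quad hb0))
            measurableSet_Ioi hpt2
  have h2b3 : 3 < 2*b^2 := by
    have hbb : 2*b^2 = (σ+Λ)^2/σ := by rw [hb2]; ring
    rw [hbb, lt_div_iff₀ hσ0]; nlinarith
  have hKlow0 : 0 < δ*(2*b^2-3)/(4*b^4) := by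
    apply div_pos (mul_pos hδ0 (by linarith)) (by positivity)
  have hK0 : 0 < P - Q := lt_of_lt_of_le hKlow0 hKlo
  have hσne : σ ≠ 0 := ne_of_gt hσ0
  have hsne : s ≠ 0 := ne_of_gt hs0
  have hΛne : Λ ≠ 0 := ne_of_gt hΛ
  have hσΛne : σ - Λ ≠ 0 := by intro h; linarith [sub_eq_zero.1 h]
  have hσΛne' : σ + Λ ≠ 0 := by positivity
  have hden : (0:ℝ) < (σ+Λ)^2 - 3*σ := by
    linarith [mul_nonneg hσ0.le (by linarith : (0:ℝ) ≤ σ - 3), mul_pos hσ0 hΛ, sq_nonneg Λ]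
  have hT : Real.sqrt (2*σ^3) = s*σ := by
    rw [show (2:ℝ)*σ^3 = (2*σ)*σ^2 by ring,
      Real.sqrt_mul (by linarith : (0:ℝ) ≤ 2*σ), Real.sqrt_sq hσ0.le, hs]
  have hfph : fph σ Λ = Λ * Real.exp (-a^2) / (Real.sqrt Real.pi * (s*σ)) := by
    have eexp : -(Λ - σ)^2/(2*σ) = -a^2 := by rw [ha2]; ring
    rw [fph, eexp, show (2:ℝ)*Real.pi*σ^3 = Real.pi*(2*σ^3) by ring,
      Real.sqrt_mul Real.pi_pos.le, hT]
  have hKne : P - Q ≠ 0 := ne_of_gt hK0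
  have hπne : Real.sqrt Real.pi ≠ 0 := ne_of_gt hπ
  have hexpne : Real.exp (-a^2) ≠ 0 := Real.exp_ne_zero _
  have hR : fph σ Λ / (1 - fpH σ Λ) = Λ / ((s*σ) * (P - Q)) := by
    rw [hfph, hfpH2]
    field_simp
  have hsσK : 0 < (s*σ) * (P - Q) := mul_pos (mul_pos hs0 hσ0) hK0
  have hKupne : 0 < δ/(2*a^2) := lt_of_lt_of_le hK0 hKup
  constructor
  · -- lower bound
    have hlo_eq : Λ/((s*σ)*(δ/(2*a^2))) = (σ-Λ)^2/(2*σ^2) := by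
      rw [hδ, ha2]
      field_simp
    have hKp' : 0 < (s*σ)*(δ/(2*a^2)) := mul_pos (mul_pos hs0 hσ0) hKupne
    rw [hR, ← hlo_eq, div_le_div_iff_of_pos_left hΛ hKp' hsσK]
    exact mul_le_mul_of_nonneg_left hKup (mul_nonneg hs0.le hσ0.le)
  · -- upper bound
    have hb4 : b^4 = ((σ+Λ)^2/(2*σ))^2 := by
      rw [show b^4 = (b^2)^2 by ring, hb2]
    have hdenne : (σ+Λ)^2 - 3*σ ≠ 0 := ne_of_gt hden
    have hKm_eq : δ*(2*b^2-3)/(4*b^4) = 2*Λ*σ*((σ+Λ)^2-3*σ)/(s*(σ+Λ)^4) := by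
      rw [hδ, hb2, hb4]
      field_simp
      ring
    have hup_eq : Λ/((s*σ)*(δ*(2*b^2-3)/(4*b^4)))
        = (σ+Λ)^4/(2*σ^2*((σ+Λ)^2 - 3*σ)) := by
      rw [hKm_eq]
      field_simp
    have hKm' : 0 < (s*σ)*(δ*(2*b^2-3)/(4*b^4)) := mul_pos (mul_pos hs0 hσ0) hKlow0
    rw [hR, ← hup_eq, div_le_div_iff_of_pos_left hΛ hsσK hKm']
    exact mul_le_mul_of_nonneg_left hKlo (mul_nonneg hs0.le hσ0.le)

theorem hazard_rate_limit (Λ : ℝ) (hΛ : 0 < Λ) :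
    Filter.Tendsto (fun σ => fph σ Λ / (1 - fpH σ Λ)) Filter.atTop (nhds (1/2)) := by
  have l1 : Tendsto (fun σ : ℝ => Λ/σ) atTop (nhds 0) :=
    tendsto_const_nhds.div_atTop tendsto_id
  have l2 : Tendsto (fun σ : ℝ => (3:ℝ)/σ) atTop (nhds 0) :=
    tendsto_const_nhds.div_atTop tendsto_id
  have hlow : Tendsto (fun σ : ℝ => (σ-Λ)^2/(2*σ^2)) atTop (nhds (1/2)) := by
    have t1 : Tendsto (fun σ : ℝ => (1 - Λ/σ)^2/2) atTop (nhds ((1 - 0)^2/2)) :=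
      ((tendsto_const_nhds.sub l1).pow 2).div_const 2
    have t2 : Tendsto (fun σ : ℝ => (1 - Λ/σ)^2/2) atTop (nhds (1/2)) := by
      convert t1 using 2; norm_num
    apply t2.congr'
    filter_upwards [eventually_gt_atTop (0:ℝ)] with σ hσ
    have hne : σ ≠ 0 := ne_of_gt hσ
    rw [show 1 - Λ/σ = (σ - Λ)/σ by field_simp, div_pow, div_div, mul_comm]
  have hup : Tendsto (fun σ : ℝ => (σ+Λ)^4/(2*σ^2*((σ+Λ)^2 - 3*σ))) atTop (nhds (1/2)) := by
    have t1 : Tendsto (fun σ : ℝ => (1 + Λ/σ)^4/(2*((1 + Λ/σ)^2 - 3/σ))) atTop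
        (nhds ((1 + 0)^4/(2*((1 + 0)^2 - 0)))) := by
      apply Tendsto.div
      · exact (tendsto_const_nhds.add l1).pow 4
      · exact (((tendsto_const_nhds.add l1).pow 2).sub l2).const_mul 2
      · norm_num
    have t2 : Tendsto (fun σ : ℝ => (1 + Λ/σ)^4/(2*((1 + Λ/σ)^2 - 3/σ))) atTop (nhds (1/2)) := by
      convert t1 using 2; norm_num
    apply t2.congr'
    filter_upwards [eventually_ge_atTop (3:ℝ)] with σ h3
    have hσ0 : (0:ℝ) < σ := by linarith
    have hσne : σ ≠ 0 := ne_of_gt hσ0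
    have hden : (0:ℝ) < (σ+Λ)^2 - 3*σ := by
      linarith [mul_nonneg hσ0.le (by linarith : (0:ℝ) ≤ σ - 3), mul_pos hσ0 hΛ, sq_nonneg Λ]
    have hdenne : (σ+Λ)^2 - 3*σ ≠ 0 := ne_of_gt hden
    have hdenne2 : (1 + Λ/σ)^2 - 3/σ ≠ 0 := by
      have : (1 + Λ/σ)^2 - 3/σ = ((σ+Λ)^2 - 3*σ)/σ^2 := by field_simp
      rw [this]
      positivity
    rw [div_eq_div_iff (mul_ne_zero two_ne_zero hdenne2) (by positivity)]
    field_simp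
  refine tendsto_of_tendsto_of_tendsto_of_le_of_le' hlow hup ?_ ?_
  · filter_upwards [eventually_ge_atTop (3:ℝ), eventually_ge_atTop (2*Λ)] with σ h3 h2
    exact (key Λ σ hΛ h3 h2).1
  · filter_upwards [eventually_ge_atTop (3:ℝ), eventually_ge_atTop (2*Λ)] with σ h3 h2
    exact (key Λ σ hΛ h3 h2).2
end

section
/- For every Λ > 0 and every fixed σ ≥ 0, lim_{τ→∞} h(τ + σ, Λ)/(1 - H(τ, Λ)) = e^{-σ/2}/2. -/
open Real MeasureTheory Set Filter Topology

noncomputable def gI (z : ℝ) : ℝ := ∫ t in Ioi z, Real.exp (-t^2)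

lemma gI_shift (z : ℝ) :
    gI z = Real.exp (-z^2) * ∫ u in Ioi 0, Real.exp (-u^2) * Real.exp (-(2*z*u)) := by
  have hemb : MeasurableEmbedding (fun x : ℝ => x + z) :=
    (Homeomorph.addRight z).isClosedEmbedding.measurableEmbedding
  have hmp : MeasurePreserving (fun x : ℝ => x + z) volume volume :=
    measurePreserving_add_right volume z
  have h := hmp.setIntegral_preimage_emb hemb (fun t => Real.exp (-t^2)) (Ioi z)
  rw [gI, ← h, preimage_add_const_Ioi, sub_self, ← integral_const_mul]
  refine setIntegral_congr_fun measurableSet_Ioi (fun u _ => ?_)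
  simp only [← Real.exp_add]
  ring_nf

lemma integrableOn_pow_exp (n : ℕ) {c : ℝ} (hc : 0 < c) :
    IntegrableOn (fun u : ℝ => u^n * Real.exp (-(c*u))) (Ioi 0) := by
  have h := integrableOn_rpow_mul_exp_neg_mul_rpow (s := (n:ℝ)) (p := 1) (b := c)
    (by exact_mod_cast neg_one_lt_zero.trans_le (Nat.cast_nonneg n)) one_pos hc
  apply h.congr_fun ?_ measurableSet_Ioi
  intro x hx
  simp only [Real.rpow_one, Real.rpow_natCast, neg_mul]

lemma integral_pow_exp (n : ℕ) {c : ℝ} (hc : 0 < c) :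
    ∫ u in Ioi (0:ℝ), u^n * Real.exp (-(c*u)) = (Nat.factorial n : ℝ) / c^(n+1) := by
  have h := Real.integral_rpow_mul_exp_neg_mul_Ioi (a := (n:ℝ)+1) (r := c) (by positivity) hc
  rw [add_sub_cancel_right] at h
  have h2 : ∀ t : ℝ, t ^ ((n:ℝ)) * Real.exp (-(c*t)) = t^n * Real.exp (-(c*t)) := by
    intro t; rw [Real.rpow_natCast]
  simp_rw [h2] at h
  rw [h]
  have : ((n:ℝ)+1) = ((n+1 : ℕ) : ℝ) := by push_cast; ring
  rw [this, Real.rpow_natCast]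
  push_cast
  rw [Real.Gamma_nat_eq_factorial, one_div, inv_pow, inv_mul_eq_div]

lemma exp_neg_le_quad {x : ℝ} (hx : 0 ≤ x) : Real.exp (-x) ≤ 1 - x + x^2/2 := by
  set f : ℝ → ℝ := fun y => 1 - y + y^2/2 - Real.exp (-y) with hf
  have hd : ∀ y : ℝ, HasDerivAt f (-1 + y + Real.exp (-y)) y := by
    intro y
    have h1 : HasDerivAt (fun y : ℝ => Real.exp (-y)) (Real.exp (-y) * (-1)) y :=
      (Real.hasDerivAt_exp (-y)).comp y ((hasDerivAt_id y).neg)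
    have h2 := (((hasDerivAt_const y (1:ℝ)).sub (hasDerivAt_id y)).add
      ((hasDerivAt_pow 2 y).div_const 2)).sub h1
    exact h2.congr_deriv (by norm_num)
  have hmono : MonotoneOn f (Ici 0) := by
    refine monotoneOn_of_deriv_nonneg (convex_Ici 0) ?_ ?_ ?_
    · exact (Continuous.continuousOn (by continuity))
    · exact fun y _ => (hd y).differentiableAt.differentiableWithinAt
    · intro y hy
      rw [(hd y).deriv]
      have := Real.add_one_le_exp (-y)
      linarith
  have h0 : f 0 = 0 := by simp [hf]
  have := hmono (self_mem_Ici) hx hx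
  rw [h0] at this
  simp only [hf] at this
  linarith

lemma lem_one_sub_le_exp (x : ℝ) : 1 - x ≤ Real.exp (-x) := by
  have := Real.add_one_le_exp (-x); linarith

lemma G_bounds {z : ℝ} (hz : 0 < z) :
    1/(2*z) - 1/(4*z^3) ≤ Real.exp (z^2) * gI z ∧
    Real.exp (z^2) * gI z ≤ 1/(2*z) - 1/(4*z^3) + 3/(8*z^5) := by
  have h2z : (0:ℝ) < 2*z := by positivity
  have hGJ : Real.exp (z^2) * gI z = ∫ u in Ioi (0:ℝ), Real.exp (-u^2) * Real.exp (-(2*z*u)) := by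
    rw [gI_shift, ← mul_assoc, ← Real.exp_add]
    norm_num
  -- integrability of the main integrand
  have hJint : IntegrableOn (fun u : ℝ => Real.exp (-u^2) * Real.exp (-(2*z*u))) (Ioi 0) := by
    have hb : IntegrableOn (fun u : ℝ => Real.exp (-(2*z) * u)) (Ioi 0) :=
      exp_neg_integrableOn_Ioi 0 h2z
    refine Integrable.mono' hb ?_ ?_
    · exact (Continuous.aestronglyMeasurable (by continuity))
    · refine Filter.Eventually.of_forall (fun u => ?_)
      rw [Real.norm_eq_abs, abs_of_pos (by positivity), neg_mul]
      have h1 : Real.exp (-u^2) ≤ 1 := by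
        rw [← Real.exp_zero]
        exact Real.exp_le_exp.mpr (by nlinarith)
      nlinarith [Real.exp_pos (-(2*z*u))]
  -- integrability of bound integrands
  have hint : ∀ n : ℕ, IntegrableOn (fun u : ℝ => u^n * Real.exp (-(2*z*u))) (Ioi 0) :=
    fun n => integrableOn_pow_exp n h2z
  have hlowint : IntegrableOn (fun u : ℝ => (1 - u^2) * Real.exp (-(2*z*u))) (Ioi 0) := by
    refine ((hint 0).sub (hint 2)).congr (Filter.Eventually.of_forall (fun u => ?_))
    simp [Pi.sub_apply]; ring
  have hupint : IntegrableOn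
      (fun u : ℝ => (1 - u^2 + u^4/2) * Real.exp (-(2*z*u))) (Ioi 0) := by
    refine (((hint 0).sub (hint 2)).add ((hint 4).div_const 2)).congr
      (Filter.Eventually.of_forall (fun u => ?_))
    simp [Pi.sub_apply, Pi.add_apply]; ring
  have hvals : ∀ n : ℕ, ∫ u in Ioi (0:ℝ), u^n * Real.exp (-(2*z*u))
      = (Nat.factorial n : ℝ) / (2*z)^(n+1) := fun n => integral_pow_exp n h2z
  have hlowval : ∫ u in Ioi (0:ℝ), (1 - u^2) * Real.exp (-(2*z*u))
      = 1/(2*z) - 1/(4*z^3) := by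
    have : ∫ u in Ioi (0:ℝ), (1 - u^2) * Real.exp (-(2*z*u))
        = (∫ u in Ioi (0:ℝ), u^0 * Real.exp (-(2*z*u)))
          - ∫ u in Ioi (0:ℝ), u^2 * Real.exp (-(2*z*u)) := by
      rw [← integral_sub (hint 0) (hint 2)]
      refine setIntegral_congr_fun measurableSet_Ioi (fun u _ => ?_)
      simp; ring
    rw [this, hvals 0, hvals 2]
    norm_num [Nat.factorial]
    field_simp
    ring
  have hupval : ∫ u in Ioi (0:ℝ), (1 - u^2 + u^4/2) * Real.exp (-(2*z*u))
      = 1/(2*z) - 1/(4*z^3) + 3/(8*z^5) := by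
    have e1 : ∫ u in Ioi (0:ℝ), (1 - u^2 + u^4/2) * Real.exp (-(2*z*u))
        = ∫ u in Ioi (0:ℝ), ((1 - u^2) * Real.exp (-(2*z*u)) + u^4 * Real.exp (-(2*z*u))/2) := by
      refine setIntegral_congr_fun measurableSet_Ioi (fun u _ => ?_)
      ring
    rw [e1, integral_add hlowint ((hint 4).div_const 2), hlowval, integral_div, hvals 4]
    norm_num [Nat.factorial]
    field_simp
    ring
  constructor
  · rw [hGJ, ← hlowval]
    refine setIntegral_mono_on hlowint hJint measurableSet_Ioi (fun u hu => ?_)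
    have := lem_one_sub_le_exp (u^2)
    nlinarith [Real.exp_pos (-(2*z*u))]
  · rw [hGJ, ← hupval]
    refine setIntegral_mono_on hJint hupint measurableSet_Ioi (fun u hu => ?_)
    have := exp_neg_le_quad (x := u^2) (by positivity)
    nlinarith [Real.exp_pos (-(2*z*u))]

lemma gauss_integrableOn (s : Set ℝ) : IntegrableOn (fun t : ℝ => Real.exp (-t^2)) s := by
  have : Integrable (fun t : ℝ => Real.exp (-t^2)) := by
    have := integrable_exp_neg_mul_sq (b := (1:ℝ)) one_pos
    simpa using this
  exact this.integrableOn

lemma gI_reflect (z : ℝ) : gI (-z) = Real.sqrt Real.pi - gI z := by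
  have h1 : ∫ x in Iic z, Real.exp (-x^2) = gI (-z) := by
    have := integral_comp_neg_Iic z (fun t : ℝ => Real.exp (-t^2))
    simp only [neg_sq] at this ⊢
    rw [gI, ← this]
  have h2 : gI (-z) + gI z = Real.sqrt Real.pi := by
    rw [← h1, gI]
    rw [intervalIntegral.integral_Iic_add_Ioi (gauss_integrableOn _) (gauss_integrableOn _)]
    have := integral_gaussian (1:ℝ)
    simpa using this
  linarith

lemma erfc_eq (z : ℝ) : erfc z = (2 / Real.sqrt Real.pi) * gI z := rfl

noncomputable def Gg (z : ℝ) : ℝ := Real.exp (z^2) * gI z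

lemma one_sub_fpH {Λ τ : ℝ} (hΛ : 0 < Λ) (h : Λ < τ) :
    1 - fpH τ Λ = Real.exp (-((τ-Λ)/Real.sqrt (2*τ))^2) *
      (Gg ((τ-Λ)/Real.sqrt (2*τ)) - Gg ((τ+Λ)/Real.sqrt (2*τ))) / Real.sqrt Real.pi := by
  have hτ0 : 0 < τ := hΛ.trans h
  have hs2 : Real.sqrt (2*τ)^2 = 2*τ := Real.sq_sqrt (by positivity)
  have hs0 : (0:ℝ) < Real.sqrt (2*τ) := Real.sqrt_pos.mpr (by positivity)
  set z1 : ℝ := (τ-Λ)/Real.sqrt (2*τ) with hz1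
  set z2 : ℝ := (τ+Λ)/Real.sqrt (2*τ) with hz2
  have h1 : (Λ-τ)/Real.sqrt (2*τ) = -z1 := by rw [hz1, ← neg_div]; ring_nf
  have hπ : (0:ℝ) < Real.sqrt Real.pi := Real.sqrt_pos.mpr Real.pi_pos
  have hzdiff : z2^2 - z1^2 = 2*Λ := by
    rw [hz1, hz2, div_pow, div_pow, hs2]
    field_simp
    ring
  have e2 : Real.exp (2*Λ) * gI z2 = Real.exp (-z1^2) * (Real.exp (z2^2) * gI z2) := by
    rw [← mul_assoc, ← Real.exp_add]
    congr 2
    linarith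
  have e3 : gI z1 = Real.exp (-z1^2) * (Real.exp (z1^2) * gI z1) := by
    rw [← mul_assoc, ← Real.exp_add]
    simp
  have step1 : 1 - fpH τ Λ = (erfc z1 - Real.exp (2*Λ) * erfc z2)/2 := by
    rw [fpH, h1, erfc_neg, add_comm Λ τ, ← hz2]
    ring
  rw [step1, erfc_eq, erfc_eq, Gg, Gg]
  rw [div_eq_div_iff (by norm_num) hπ.ne']
  field_simp
  linear_combination e3 - e2

lemma tendsto_c_div_shift (c a : ℝ) : Tendsto (fun τ : ℝ => c/(τ+a)) atTop (nhds 0) :=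
  Tendsto.div_atTop tendsto_const_nhds (tendsto_atTop_add_const_right _ a tendsto_id)

lemma tendsto_ratio_shift (a : ℝ) : Tendsto (fun τ : ℝ => τ/(τ+a)) atTop (nhds 1) := by
  have h : ∀ᶠ τ : ℝ in atTop, 1 + (-a)/(τ+a) = τ/(τ+a) := by
    filter_upwards [eventually_gt_atTop (-a)] with τ hτ
    have : τ + a ≠ 0 := by linarith
    field_simp
    ring
  refine Tendsto.congr' h ?_
  have := (tendsto_const_nhds (x := (1:ℝ)) (f := atTop)).add (tendsto_c_div_shift (-a) a)
  simpa using this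

lemma tendsto_ratio_sub (a : ℝ) : Tendsto (fun τ : ℝ => τ/(τ-a)) atTop (nhds 1) := by
  have := tendsto_ratio_shift (-a)
  simpa [sub_eq_add_neg] using this

lemma tendsto_c_div_sub (c a : ℝ) : Tendsto (fun τ : ℝ => c/(τ-a)) atTop (nhds 0) := by
  have := tendsto_c_div_shift c (-a)
  simpa [sub_eq_add_neg] using this

set_option maxHeartbeats 3000000 in
lemma Dlim {Λ : ℝ} (hΛ : 0 < Λ) :
    Tendsto (fun τ => τ * Real.sqrt τ *
      (Gg ((τ-Λ)/Real.sqrt (2*τ)) - Gg ((τ+Λ)/Real.sqrt (2*τ)))) atTop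
      (nhds (Real.sqrt 2 * Λ)) := by
  set c2 : ℝ := Real.sqrt 2 with hc2
  have hc2pos : 0 < c2 := Real.sqrt_pos.mpr (by norm_num)
  -- closed-form comparison functions
  set A : ℝ → ℝ := fun τ => c2 * τ^2/(2*(τ-Λ)) with hA
  set B : ℝ → ℝ := fun τ => c2 * τ^2/(2*(τ+Λ)) with hB
  set C : ℝ → ℝ := fun τ => c2^3 * τ^3/(4*(τ-Λ)^3) with hC
  set Cb : ℝ → ℝ := fun τ => c2^3 * τ^3/(4*(τ+Λ)^3) with hCb
  set P : ℝ → ℝ := fun τ => 3*c2^5 * τ^4/(8*(τ-Λ)^5) with hP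
  set Pb : ℝ → ℝ := fun τ => 3*c2^5 * τ^4/(8*(τ+Λ)^5) with hPb
  have hrm := tendsto_ratio_sub Λ
  have hrp := tendsto_ratio_shift Λ
  -- limits of the comparison pieces
  have hAB : Tendsto (fun τ => A τ - B τ) atTop (nhds (c2 * Λ)) := by
    have hid : ∀ᶠ τ : ℝ in atTop, c2*Λ*((τ/(τ-Λ))*(τ/(τ+Λ))) = A τ - B τ := by
      filter_upwards [eventually_gt_atTop Λ] with τ hτ
      have h1 : τ - Λ ≠ 0 := by linarith
      have h2 : τ + Λ ≠ 0 := ne_of_gt (by linarith)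
      rw [hA, hB]
      field_simp
      ring
    refine Tendsto.congr' hid ?_
    have := (tendsto_const_nhds (x := c2*Λ) (f := atTop (α := ℝ))).mul (hrm.mul hrp)
    simpa using this
  have hCt : Tendsto C atTop (nhds (c2^3/4)) := by
    have hid : ∀ᶠ τ : ℝ in atTop, c2^3/4*((τ/(τ-Λ))^3) = C τ := by
      filter_upwards [eventually_gt_atTop Λ] with τ hτ
      have h1 : τ - Λ ≠ 0 := by linarith
      rw [hC]
      field_simp
    refine Tendsto.congr' hid ?_
    have := (tendsto_const_nhds (x := c2^3/4) (f := atTop (α := ℝ))).mul (hrm.pow 3)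
    simpa using this
  have hCbt : Tendsto Cb atTop (nhds (c2^3/4)) := by
    have hid : ∀ᶠ τ : ℝ in atTop, c2^3/4*((τ/(τ+Λ))^3) = Cb τ := by
      filter_upwards [eventually_gt_atTop Λ] with τ hτ
      have h2 : τ + Λ ≠ 0 := ne_of_gt (by linarith)
      rw [hCb]
      field_simp
    refine Tendsto.congr' hid ?_
    have := (tendsto_const_nhds (x := c2^3/4) (f := atTop (α := ℝ))).mul (hrp.pow 3)
    simpa using this
  have hPt : Tendsto P atTop (nhds 0) := by
    have hid : ∀ᶠ τ : ℝ in atTop, 3*c2^5/8*((τ/(τ-Λ))^4*(1/(τ-Λ))) = P τ := by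
      filter_upwards [eventually_gt_atTop Λ] with τ hτ
      have h1 : τ - Λ ≠ 0 := by linarith
      rw [hP]
      field_simp
      try ring
      try exact Or.inl trivial
    refine Tendsto.congr' hid ?_
    have := (tendsto_const_nhds (x := 3*c2^5/8) (f := atTop (α := ℝ))).mul
      ((hrm.pow 4).mul (tendsto_c_div_sub 1 Λ))
    simpa using this
  have hPbt : Tendsto Pb atTop (nhds 0) := by
    have hid : ∀ᶠ τ : ℝ in atTop, 3*c2^5/8*((τ/(τ+Λ))^4*(1/(τ+Λ))) = Pb τ := by
      filter_upwards [eventually_gt_atTop Λ] with τ hτ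
      have h2 : τ + Λ ≠ 0 := ne_of_gt (by linarith)
      rw [hPb]
      field_simp
      try ring
      try exact Or.inl trivial
    refine Tendsto.congr' hid ?_
    have := (tendsto_const_nhds (x := 3*c2^5/8) (f := atTop (α := ℝ))).mul
      ((hrp.pow 4).mul (tendsto_c_div_shift 1 Λ))
    simpa using this
  have hLf : Tendsto (fun τ => A τ - B τ - C τ + Cb τ - Pb τ) atTop (nhds (c2*Λ)) := by
    have := (((hAB.sub hCt).add hCbt).sub hPbt)
    have h0 : c2*Λ - c2^3/4 + c2^3/4 - 0 = c2*Λ := by ring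
    rwa [h0] at this
  have hUf : Tendsto (fun τ => A τ - B τ - C τ + Cb τ + P τ) atTop (nhds (c2*Λ)) := by
    have := (((hAB.sub hCt).add hCbt).add hPt)
    have h0 : c2*Λ - c2^3/4 + c2^3/4 + 0 = c2*Λ := by ring
    rwa [h0] at this
  refine tendsto_of_tendsto_of_tendsto_of_le_of_le' hLf hUf ?_ ?_
  · -- lower bound
    filter_upwards [eventually_gt_atTop Λ] with τ hτ
    have hτ0 : 0 < τ := hΛ.trans hτ
    obtain ⟨s, hs0, rfl⟩ : ∃ s : ℝ, 0 < s ∧ s^2 = τ :=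
      ⟨Real.sqrt τ, Real.sqrt_pos.mpr hτ0, Real.sq_sqrt hτ0.le⟩
    have hss : Real.sqrt (s^2) = s := Real.sqrt_sq hs0.le
    have h2s : Real.sqrt (2*s^2) = c2 * s := by rw [Real.sqrt_mul (by norm_num), hss]
    rw [hss, h2s]
    have h1 : s^2 - Λ ≠ 0 := by nlinarith
    have h2 : s^2 + Λ ≠ 0 := by positivity
    have hz1pos : 0 < (s^2-Λ)/(c2*s) := div_pos (by nlinarith) (by positivity)
    have hz2pos : 0 < (s^2+Λ)/(c2*s) := div_pos (by positivity) (by positivity)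
    obtain ⟨lo1, -⟩ := G_bounds hz1pos
    obtain ⟨-, up2⟩ := G_bounds hz2pos
    have key : A (s^2) - B (s^2) - C (s^2) + Cb (s^2) - Pb (s^2)
        = s^2 * s * ((1/(2*((s^2-Λ)/(c2*s))) - 1/(4*((s^2-Λ)/(c2*s))^3))
          - (1/(2*((s^2+Λ)/(c2*s))) - 1/(4*((s^2+Λ)/(c2*s))^3) + 3/(8*((s^2+Λ)/(c2*s))^5))) := by
      rw [hA, hB, hC, hCb, hPb]
      field_simp
      ring
    rw [key]
    refine mul_le_mul_of_nonneg_left ?_ (by positivity)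
    simp only [Gg]
    linarith
  · -- upper bound
    filter_upwards [eventually_gt_atTop Λ] with τ hτ
    have hτ0 : 0 < τ := hΛ.trans hτ
    obtain ⟨s, hs0, rfl⟩ : ∃ s : ℝ, 0 < s ∧ s^2 = τ :=
      ⟨Real.sqrt τ, Real.sqrt_pos.mpr hτ0, Real.sq_sqrt hτ0.le⟩
    have hss : Real.sqrt (s^2) = s := Real.sqrt_sq hs0.le
    have h2s : Real.sqrt (2*s^2) = c2 * s := by rw [Real.sqrt_mul (by norm_num), hss]
    rw [hss, h2s]
    have h1 : s^2 - Λ ≠ 0 := by nlinarith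
    have h2 : s^2 + Λ ≠ 0 := by positivity
    have hz1pos : 0 < (s^2-Λ)/(c2*s) := div_pos (by nlinarith) (by positivity)
    have hz2pos : 0 < (s^2+Λ)/(c2*s) := div_pos (by positivity) (by positivity)
    obtain ⟨-, up1⟩ := G_bounds hz1pos
    obtain ⟨lo2, -⟩ := G_bounds hz2pos
    have key : A (s^2) - B (s^2) - C (s^2) + Cb (s^2) + P (s^2)
        = s^2 * s * ((1/(2*((s^2-Λ)/(c2*s))) - 1/(4*((s^2-Λ)/(c2*s))^3) + 3/(8*((s^2-Λ)/(c2*s))^5))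
          - (1/(2*((s^2+Λ)/(c2*s))) - 1/(4*((s^2+Λ)/(c2*s))^3))) := by
      rw [hA, hB, hC, hCb, hP]
      field_simp
      ring
    rw [key]
    refine mul_le_mul_of_nonneg_left ?_ (by positivity)
    simp only [Gg]
    linarith

set_option maxHeartbeats 1000000 in
theorem shifted_hazard_limit (Λ σ : ℝ) (hΛ : 0 < Λ) (hσ : 0 ≤ σ) :
    Filter.Tendsto (fun τ => fph (τ + σ) Λ / (1 - fpH τ Λ)) Filter.atTop
      (nhds (Real.exp (-σ/2) / 2)) := by
  have hc2 : (0:ℝ) < Real.sqrt 2 := Real.sqrt_pos.mpr (by norm_num)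
  have hπ0 : (0:ℝ) < Real.pi := Real.pi_pos
  have hsπ : (0:ℝ) < Real.sqrt Real.pi := Real.sqrt_pos.mpr hπ0
  set D : ℝ → ℝ := fun τ => τ * Real.sqrt τ *
    (Gg ((τ-Λ)/Real.sqrt (2*τ)) - Gg ((τ+Λ)/Real.sqrt (2*τ))) with hDdef
  have hDlim : Tendsto D atTop (nhds (Real.sqrt 2 * Λ)) := Dlim hΛ
  have hDpos : ∀ᶠ τ in atTop, 0 < D τ :=
    hDlim.eventually (eventually_gt_nhds (by positivity))
  -- exponent limit
  have hE : Tendsto (fun τ => ((τ-Λ)/Real.sqrt (2*τ))^2 + (-(Λ-(τ+σ))^2/(2*(τ+σ))))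
      atTop (nhds (-σ/2)) := by
    have hid : ∀ᶠ τ : ℝ in atTop, -σ/2 + (Λ^2/(2*τ) - Λ^2/(2*(τ+σ)))
        = ((τ-Λ)/Real.sqrt (2*τ))^2 + (-(Λ-(τ+σ))^2/(2*(τ+σ))) := by
      filter_upwards [eventually_gt_atTop 0] with τ hτ0
      have hτσ : 0 < τ + σ := by linarith
      have hsq : Real.sqrt (2*τ)^2 = 2*τ := Real.sq_sqrt (by linarith)
      rw [div_pow, hsq]
      field_simp
      ring
    refine Tendsto.congr' hid ?_
    have h1 : Tendsto (fun τ : ℝ => Λ^2/(2*τ)) atTop (nhds 0) :=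
      Tendsto.div_atTop tendsto_const_nhds (tendsto_id.const_mul_atTop two_pos)
    have h2 : Tendsto (fun τ : ℝ => Λ^2/(2*(τ+σ))) atTop (nhds 0) :=
      Tendsto.div_atTop tendsto_const_nhds
        ((tendsto_atTop_add_const_right _ σ tendsto_id).const_mul_atTop two_pos)
    have := (tendsto_const_nhds (x := -σ/2) (f := atTop (α := ℝ))).add (h1.sub h2)
    simpa using this
  -- the sqrt correction factor tends to 1
  have hroot : Tendsto (fun τ : ℝ => Real.sqrt ((1+σ/τ)^3)) atTop (nhds 1) := by
    have h0 : Tendsto (fun τ : ℝ => 1+σ/τ) atTop (nhds 1) := by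
      have := (tendsto_const_nhds (x := (1:ℝ)) (f := atTop (α := ℝ))).add
        (Tendsto.div_atTop (tendsto_const_nhds (x := σ)) tendsto_id)
      simpa using this
    have h1 : Tendsto (fun τ : ℝ => (1+σ/τ)^3) atTop (nhds 1) := by
      have := h0.pow 3
      simpa using this
    have hcont := (Real.continuous_sqrt.tendsto 1).comp h1
    simpa [Function.comp_def] using hcont
  -- eventual equality of the ratio with the normalized expression
  have hmain : ∀ᶠ τ in atTop,
      Λ * Real.exp (((τ-Λ)/Real.sqrt (2*τ))^2 + (-(Λ-(τ+σ))^2/(2*(τ+σ))))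
        / (Real.sqrt 2 * Real.sqrt ((1+σ/τ)^3) * D τ)
      = fph (τ+σ) Λ / (1 - fpH τ Λ) := by
    filter_upwards [eventually_gt_atTop Λ, hDpos] with τ hτ hDτ
    have hτ0 : 0 < τ := hΛ.trans hτ
    have hτσ : 0 < τ + σ := by linarith
    have hts : 0 < τ * Real.sqrt τ := by positivity
    have hΔ : 0 < Gg ((τ-Λ)/Real.sqrt (2*τ)) - Gg ((τ+Λ)/Real.sqrt (2*τ)) := by
      by_contra hcon
      push_neg at hcon
      have : D τ ≤ 0 := mul_nonpos_of_nonneg_of_nonpos hts.le hcon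
      linarith
    rw [one_sub_fpH hΛ hτ, fph]
    have e1 : (τ+σ)^3 = (τ^2*τ)*(1+σ/τ)^3 := by field_simp
    have hq : Real.sqrt (2*Real.pi*(τ+σ)^3)
        = Real.sqrt Real.pi * (Real.sqrt 2 * Real.sqrt ((1+σ/τ)^3)) * (τ * Real.sqrt τ) := by
      rw [show (2*Real.pi*(τ+σ)^3) = 2*(Real.pi*((τ^2*τ)*((1+σ/τ)^3))) from by rw [← e1]; ring]
      rw [Real.sqrt_mul (by norm_num : (0:ℝ) ≤ 2), Real.sqrt_mul hπ0.le,
        Real.sqrt_mul (by positivity : (0:ℝ) ≤ τ^2*τ), Real.sqrt_mul (sq_nonneg τ),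
        Real.sqrt_sq hτ0.le]
      ring
    have hw : (0:ℝ) < Real.sqrt ((1+σ/τ)^3) := Real.sqrt_pos.mpr (by positivity)
    have hst : (0:ℝ) < Real.sqrt τ := Real.sqrt_pos.mpr hτ0
    rw [hq, Real.exp_add, hDdef,
      show Real.exp (-((τ-Λ)/Real.sqrt (2*τ))^2)
        = (Real.exp (((τ-Λ)/Real.sqrt (2*τ))^2))⁻¹ from by rw [← Real.exp_neg]]
    simp only []
    set X := Real.exp (((τ-Λ)/Real.sqrt (2*τ))^2) with hX
    set Y := Real.exp (-(Λ-(τ+σ))^2/(2*(τ+σ))) with hY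
    set Dl := Gg ((τ-Λ)/Real.sqrt (2*τ)) - Gg ((τ+Λ)/Real.sqrt (2*τ)) with hDl
    set R := Real.sqrt ((1+σ/τ)^3) with hR
    set S := Real.sqrt τ with hS
    have hX0 : X ≠ 0 := Real.exp_ne_zero _
    field_simp
  refine Tendsto.congr' hmain ?_
  have hnum : Tendsto (fun τ => Λ * Real.exp (((τ-Λ)/Real.sqrt (2*τ))^2
      + (-(Λ-(τ+σ))^2/(2*(τ+σ))))) atTop (nhds (Λ * Real.exp (-σ/2))) :=
    tendsto_const_nhds.mul ((Real.continuous_exp.tendsto _).comp hE)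
  have hden : Tendsto (fun τ => Real.sqrt 2 * Real.sqrt ((1+σ/τ)^3) * D τ) atTop
      (nhds (Real.sqrt 2 * 1 * (Real.sqrt 2 * Λ))) :=
    (tendsto_const_nhds.mul hroot).mul hDlim
  have hden_ne : Real.sqrt 2 * 1 * (Real.sqrt 2 * Λ) ≠ 0 := by positivity
  have hfin := hnum.div hden hden_ne
  have hval : Λ * Real.exp (-σ/2)/(Real.sqrt 2 * 1 * (Real.sqrt 2 * Λ))
      = Real.exp (-σ/2)/2 := by
    have h22 : Real.sqrt 2 * Real.sqrt 2 = 2 := Real.mul_self_sqrt (by norm_num)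
    rw [mul_one, ← mul_assoc, h22]
    field_simp
  rwa [hval] at hfin
end

section
/- The absorbed heat kernel satisfies the Chapman–Kolmogorov relation: for all σ, τ > 0 and x, y > 0, ∫_0^∞ κ(σ, y, z)·κ(τ, z, x) dz = κ(σ + τ, y, x). -/
open Real MeasureTheory Set Filter Topology

lemma gauss_shift (b m : ℝ) (hb : 0 < b) :
    ∫ z : ℝ, Real.exp (-b * (z - m)^2) = Real.sqrt (Real.pi / b) := by
  rw [integral_sub_right_eq_self (fun u : ℝ => Real.exp (-b * u^2)) m]
  exact integral_gaussian b

lemma int_gauss_shift (b m : ℝ) (hb : 0 < b) :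
    Integrable (fun z : ℝ => Real.exp (-b * (z - m)^2)) :=
  (integrable_exp_neg_mul_sq hb).comp_sub_right m

lemma gauss_conv (p q a b : ℝ) (hp : 0 < p) (hq : 0 < q) :
    ∫ z : ℝ, Real.exp (-((z - a)^2)/(2*p)) * Real.exp (-((z - b)^2)/(2*q))
      = Real.sqrt (2*Real.pi*p*q/(p+q)) * Real.exp (-((a - b)^2)/(2*(p+q))) := by
  have hpq : 0 < p + q := by linarith
  set B : ℝ := (p+q)/(2*p*q) with hB
  have hBpos : 0 < B := by positivity
  set m : ℝ := (q*a + p*b)/(p+q) with hm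
  have hfun : ∀ z : ℝ, Real.exp (-((z - a)^2)/(2*p)) * Real.exp (-((z - b)^2)/(2*q))
      = Real.exp (-((a - b)^2)/(2*(p+q))) * Real.exp (-B * (z - m)^2) := by
    intro z
    rw [← Real.exp_add, ← Real.exp_add]
    congr 1
    rw [hB, hm]
    field_simp
    ring
  calc ∫ z : ℝ, Real.exp (-((z - a)^2)/(2*p)) * Real.exp (-((z - b)^2)/(2*q))
      = ∫ z : ℝ, Real.exp (-((a - b)^2)/(2*(p+q))) * Real.exp (-B * (z - m)^2) :=
        integral_congr_ae (Filter.Eventually.of_forall hfun)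
    _ = Real.exp (-((a - b)^2)/(2*(p+q))) * ∫ z : ℝ, Real.exp (-B * (z - m)^2) :=
        MeasureTheory.integral_const_mul _ _
    _ = Real.sqrt (2*Real.pi*p*q/(p+q)) * Real.exp (-((a - b)^2)/(2*(p+q))) := by
        rw [gauss_shift B m hBpos, mul_comm]
        congr 2
        rw [hB]
        field_simp

lemma int_gauss_prod (p q a b : ℝ) (hp : 0 < p) (hq : 0 < q) :
    Integrable (fun z : ℝ => Real.exp (-((z - a)^2)/(2*p)) * Real.exp (-((z - b)^2)/(2*q))) := by
  have hpq : 0 < p + q := by linarith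
  set B : ℝ := (p+q)/(2*p*q) with hB
  have hBpos : 0 < B := by positivity
  set m : ℝ := (q*a + p*b)/(p+q) with hm
  have hfun : ∀ z : ℝ, Real.exp (-((z - a)^2)/(2*p)) * Real.exp (-((z - b)^2)/(2*q))
      = Real.exp (-((a - b)^2)/(2*(p+q))) * Real.exp (-B * (z - m)^2) := by
    intro z
    rw [← Real.exp_add, ← Real.exp_add]
    congr 1
    rw [hB, hm]
    field_simp
    ring
  have h := (int_gauss_shift B m hBpos).const_mul (Real.exp (-((a - b)^2)/(2*(p+q))))
  exact h.congr (Filter.Eventually.of_forall fun z => (hfun z).symm)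

lemma kapA (σ y x : ℝ) (hσ : 0 < σ) :
    kap σ y x = (Real.exp (-((x - (y+σ))^2)/(2*σ))
      - Real.exp (-(2*y)) * Real.exp (-((x - (σ-y))^2)/(2*σ))) / Real.sqrt (2*Real.pi*σ) := by
  have hσ' : σ ≠ 0 := hσ.ne'
  unfold kap
  have h1 : Real.exp (-(y - x + σ)^2/(2*σ)) = Real.exp (-((x - (y+σ))^2)/(2*σ)) := by
    congr 1; ring
  have h2 : Real.exp (-(y - x + σ)^2/(2*σ)) * Real.exp (-(2*x*y)/σ)
      = Real.exp (-(2*y)) * Real.exp (-((x - (σ-y))^2)/(2*σ)) := by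
    rw [← Real.exp_add, ← Real.exp_add]; congr 1; field_simp; ring
  linear_combination (1/Real.sqrt (2*Real.pi*σ)) * h1 - (1/Real.sqrt (2*Real.pi*σ)) * h2

lemma kapB (τ z x : ℝ) (hτ : 0 < τ) :
    kap τ z x = (Real.exp (-((z - (x-τ))^2)/(2*τ))
      - Real.exp (2*x) * Real.exp (-((z - (-x-τ))^2)/(2*τ))) / Real.sqrt (2*Real.pi*τ) := by
  have hτ' : τ ≠ 0 := hτ.ne'
  unfold kap
  have h1 : Real.exp (-(z - x + τ)^2/(2*τ)) = Real.exp (-((z - (x-τ))^2)/(2*τ)) := by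
    congr 1; ring
  have h2 : Real.exp (-(z - x + τ)^2/(2*τ)) * Real.exp (-(2*x*z)/τ)
      = Real.exp (2*x) * Real.exp (-((z - (-x-τ))^2)/(2*τ)) := by
    rw [← Real.exp_add, ← Real.exp_add]; congr 1; field_simp; ring
  linear_combination (1/Real.sqrt (2*Real.pi*τ)) * h1 - (1/Real.sqrt (2*Real.pi*τ)) * h2

lemma kap_neg_snd (σ y z : ℝ) (hσ : σ ≠ 0) :
    kap σ y (-z) = -Real.exp (-(2*z)) * kap σ y z := by
  unfold kap
  have h1 : Real.exp (-(2*z)) * Real.exp (-(y - z + σ)^2/(2*σ))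
      = Real.exp (-(2*(-z)*y)/σ) * Real.exp (-(y - -z + σ)^2/(2*σ)) := by
    rw [← Real.exp_add, ← Real.exp_add]; congr 1; field_simp; ring
  have h2 : Real.exp (-(2*(-z)*y)/σ) * Real.exp (-(2*z*y)/σ) = 1 := by
    rw [← Real.exp_add, show (-(2*(-z)*y)/σ + -(2*z*y)/σ : ℝ) = 0 by ring, Real.exp_zero]
  linear_combination (1 - Real.exp (-(2*z*y)/σ))/Real.sqrt (2*Real.pi*σ) * h1
    - (Real.exp (-(y - -z + σ)^2/(2*σ))/Real.sqrt (2*Real.pi*σ)) * h2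

lemma kap_neg_fst (τ x z : ℝ) (hτ : τ ≠ 0) :
    kap τ (-z) x = -Real.exp (2*z) * kap τ z x := by
  unfold kap
  have h1 : Real.exp (2*z) * Real.exp (-(z - x + τ)^2/(2*τ))
      = Real.exp (-(2*x*(-z))/τ) * Real.exp (-(-z - x + τ)^2/(2*τ)) := by
    rw [← Real.exp_add, ← Real.exp_add]; congr 1; field_simp; ring
  have h2 : Real.exp (-(2*x*(-z))/τ) * Real.exp (-(2*x*z)/τ) = 1 := by
    rw [← Real.exp_add, show (-(2*x*(-z))/τ + -(2*x*z)/τ : ℝ) = 0 by ring, Real.exp_zero]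
  linear_combination (1 - Real.exp (-(2*x*z)/τ))/Real.sqrt (2*Real.pi*τ) * h1
    - (Real.exp (-(-z - x + τ)^2/(2*τ))/Real.sqrt (2*Real.pi*τ)) * h2

theorem kap_chapman_kolmogorov (σ τ x y : ℝ) (hσ : 0 < σ) (hτ : 0 < τ)
    (hx : 0 < x) (hy : 0 < y) :
    (∫ z in Set.Ioi (0:ℝ), kap σ y z * kap τ z x) = kap (σ + τ) y x := by
  have hσ' : σ ≠ 0 := hσ.ne'
  have hτ' : τ ≠ 0 := hτ.ne'
  have hU : 0 < σ + τ := by linarith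
  have hsne : Real.sqrt (2*Real.pi*σ) ≠ 0 := by positivity
  have htne : Real.sqrt (2*Real.pi*τ) ≠ 0 := by positivity
  have hKne : Real.sqrt (2*Real.pi*(σ+τ)) ≠ 0 := by positivity
  have hVne : Real.sqrt (2*Real.pi*σ*τ/(σ+τ)) ≠ 0 := by positivity
  have hprod : ∀ z : ℝ, kap σ y z * kap τ z x =
      (Real.exp (-((z - (y+σ))^2)/(2*σ)) * Real.exp (-((z - (x-τ))^2)/(2*τ))
       - Real.exp (2*x) * (Real.exp (-((z - (y+σ))^2)/(2*σ)) * Real.exp (-((z - (-x-τ))^2)/(2*τ)))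
       - Real.exp (-(2*y)) * (Real.exp (-((z - (σ-y))^2)/(2*σ)) * Real.exp (-((z - (x-τ))^2)/(2*τ)))
       + Real.exp (-(2*y)) * Real.exp (2*x)
         * (Real.exp (-((z - (σ-y))^2)/(2*σ)) * Real.exp (-((z - (-x-τ))^2)/(2*τ))))
      / (Real.sqrt (2*Real.pi*σ) * Real.sqrt (2*Real.pi*τ)) := by
    intro z
    rw [kapA σ y z hσ, kapB τ z x hτ]
    field_simp
    ring
  have hi11 := int_gauss_prod σ τ (y+σ) (x-τ) hσ hτ
  have hi12 := int_gauss_prod σ τ (y+σ) (-x-τ) hσ hτ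
  have hi21 := int_gauss_prod σ τ (σ-y) (x-τ) hσ hτ
  have hi22 := int_gauss_prod σ τ (σ-y) (-x-τ) hσ hτ
  have hPint : Integrable (fun z : ℝ => kap σ y z * kap τ z x) := by
    have h := ((((hi11.sub (hi12.const_mul (Real.exp (2*x)))).sub
        (hi21.const_mul (Real.exp (-(2*y))))).add
        (hi22.const_mul (Real.exp (-(2*y)) * Real.exp (2*x)))).div_const
        (Real.sqrt (2*Real.pi*σ) * Real.sqrt (2*Real.pi*τ)))
    exact h.congr (Filter.Eventually.of_forall fun z => (hprod z).symm)
  have hfull : (∫ z : ℝ, kap σ y z * kap τ z x) = 2 * kap (σ + τ) y x := by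
    have e11 := gauss_conv σ τ (y+σ) (x-τ) hσ hτ
    have e12 := gauss_conv σ τ (y+σ) (-x-τ) hσ hτ
    have e21 := gauss_conv σ τ (σ-y) (x-τ) hσ hτ
    have e22 := gauss_conv σ τ (σ-y) (-x-τ) hσ hτ
    calc (∫ z : ℝ, kap σ y z * kap τ z x)
        = ∫ z : ℝ, (Real.exp (-((z - (y+σ))^2)/(2*σ)) * Real.exp (-((z - (x-τ))^2)/(2*τ))
           - Real.exp (2*x) * (Real.exp (-((z - (y+σ))^2)/(2*σ)) * Real.exp (-((z - (-x-τ))^2)/(2*τ)))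
           - Real.exp (-(2*y)) * (Real.exp (-((z - (σ-y))^2)/(2*σ)) * Real.exp (-((z - (x-τ))^2)/(2*τ)))
           + Real.exp (-(2*y)) * Real.exp (2*x)
             * (Real.exp (-((z - (σ-y))^2)/(2*σ)) * Real.exp (-((z - (-x-τ))^2)/(2*τ))))
          / (Real.sqrt (2*Real.pi*σ) * Real.sqrt (2*Real.pi*τ)) :=
          integral_congr_ae (Filter.Eventually.of_forall hprod)
      _ = (∫ z : ℝ, (Real.exp (-((z - (y+σ))^2)/(2*σ)) * Real.exp (-((z - (x-τ))^2)/(2*τ))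
           - Real.exp (2*x) * (Real.exp (-((z - (y+σ))^2)/(2*σ)) * Real.exp (-((z - (-x-τ))^2)/(2*τ)))
           - Real.exp (-(2*y)) * (Real.exp (-((z - (σ-y))^2)/(2*σ)) * Real.exp (-((z - (x-τ))^2)/(2*τ)))
           + Real.exp (-(2*y)) * Real.exp (2*x)
             * (Real.exp (-((z - (σ-y))^2)/(2*σ)) * Real.exp (-((z - (-x-τ))^2)/(2*τ)))))
          / (Real.sqrt (2*Real.pi*σ) * Real.sqrt (2*Real.pi*τ)) := integral_div _ _
      _ = ((∫ z : ℝ, Real.exp (-((z - (y+σ))^2)/(2*σ)) * Real.exp (-((z - (x-τ))^2)/(2*τ)))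
           - Real.exp (2*x) * (∫ z : ℝ, Real.exp (-((z - (y+σ))^2)/(2*σ)) * Real.exp (-((z - (-x-τ))^2)/(2*τ)))
           - Real.exp (-(2*y)) * (∫ z : ℝ, Real.exp (-((z - (σ-y))^2)/(2*σ)) * Real.exp (-((z - (x-τ))^2)/(2*τ)))
           + Real.exp (-(2*y)) * Real.exp (2*x)
             * (∫ z : ℝ, Real.exp (-((z - (σ-y))^2)/(2*σ)) * Real.exp (-((z - (-x-τ))^2)/(2*τ))))
          / (Real.sqrt (2*Real.pi*σ) * Real.sqrt (2*Real.pi*τ)) := by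
          have hIs1 : Integrable (fun z : ℝ => Real.exp (-((z - (y+σ))^2)/(2*σ)) * Real.exp (-((z - (x-τ))^2)/(2*τ))
              - Real.exp (2*x) * (Real.exp (-((z - (y+σ))^2)/(2*σ)) * Real.exp (-((z - (-x-τ))^2)/(2*τ)))) :=
            hi11.sub (hi12.const_mul _)
          have hIs2 : Integrable (fun z : ℝ => Real.exp (-((z - (y+σ))^2)/(2*σ)) * Real.exp (-((z - (x-τ))^2)/(2*τ))
              - Real.exp (2*x) * (Real.exp (-((z - (y+σ))^2)/(2*σ)) * Real.exp (-((z - (-x-τ))^2)/(2*τ)))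
              - Real.exp (-(2*y)) * (Real.exp (-((z - (σ-y))^2)/(2*σ)) * Real.exp (-((z - (x-τ))^2)/(2*τ)))) :=
            hIs1.sub (hi21.const_mul _)
          rw [integral_add hIs2 (hi22.const_mul _),
            integral_sub hIs1 (hi21.const_mul _),
            integral_sub hi11 (hi12.const_mul _),
            MeasureTheory.integral_const_mul, MeasureTheory.integral_const_mul,
            MeasureTheory.integral_const_mul]
      _ = 2 * kap (σ + τ) y x := by
          rw [e11, e12, e21, e22, kapB (σ+τ) y x hU]
          have hx1 : Real.exp (-(((y+σ) - (x-τ))^2)/(2*(σ+τ)))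
              = Real.exp (-((y - (x-(σ+τ)))^2)/(2*(σ+τ))) := by congr 1; ring
          have hx2 : Real.exp (-(((y+σ) - (-x-τ))^2)/(2*(σ+τ)))
              = Real.exp (-((y - (-x-(σ+τ)))^2)/(2*(σ+τ))) := by congr 1; ring
          have hx3 : Real.exp (-(2*y)) * Real.exp (-(((σ-y) - (x-τ))^2)/(2*(σ+τ)))
              = Real.exp (2*x) * Real.exp (-((y - (-x-(σ+τ)))^2)/(2*(σ+τ))) := by
            rw [← Real.exp_add, ← Real.exp_add]; congr 1; field_simp; ring
          have hx4 : Real.exp (-(2*y)) * Real.exp (2*x) * Real.exp (-(((σ-y) - (-x-τ))^2)/(2*(σ+τ)))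
              = Real.exp (-((y - (x-(σ+τ)))^2)/(2*(σ+τ))) := by
            rw [← Real.exp_add, ← Real.exp_add]; congr 1; field_simp; ring
          have hVK : Real.sqrt (2*Real.pi*σ*τ/(σ+τ)) * Real.sqrt (2*Real.pi*(σ+τ))
              = Real.sqrt (2*Real.pi*σ) * Real.sqrt (2*Real.pi*τ) := by
            rw [← Real.sqrt_mul (by positivity), ← Real.sqrt_mul (by positivity)]
            congr 1; field_simp
          rw [hx1, hx2]
          set V := Real.sqrt (2*Real.pi*σ*τ/(σ+τ))
          set K := Real.sqrt (2*Real.pi*(σ+τ))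
          set S := Real.sqrt (2*Real.pi*σ)
          set T := Real.sqrt (2*Real.pi*τ)
          set E := Real.exp (-((y - (x-(σ+τ)))^2)/(2*(σ+τ)))
          set F := Real.exp (-((y - (-x-(σ+τ)))^2)/(2*(σ+τ)))
          set c := Real.exp (2*x)
          set d := Real.exp (-(2*y))
          set C := Real.exp (-(((σ-y) - (x-τ))^2)/(2*(σ+τ)))
          set D := Real.exp (-(((σ-y) - (-x-τ))^2)/(2*(σ+τ)))
          -- hx3 : d * C = c * F, hx4 : d * c * D = E, hVK : V * K = S * T
          field_simp
          linear_combination (V*K) * hx4 - (V*K) * hx3 + (2*E - 2*c*F) * hVK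
  have h0 := integral_comp_neg_Ioi (0:ℝ) (fun z => kap σ y z * kap τ z x)
  rw [neg_zero] at h0
  have hIic : (∫ z in Set.Iic (0:ℝ), kap σ y z * kap τ z x)
      = ∫ z in Set.Ioi (0:ℝ), kap σ y z * kap τ z x := by
    rw [← h0]
    refine setIntegral_congr_fun measurableSet_Ioi (fun z hz => ?_)
    rw [kap_neg_snd σ y z hσ', kap_neg_fst τ x z hτ']
    have hone : Real.exp (-(2*z)) * Real.exp (2*z) = 1 := by
      rw [← Real.exp_add]; norm_num
    linear_combination (kap σ y z * kap τ z x) * hone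
  have hsplit := intervalIntegral.integral_Iic_add_Ioi (b := (0:ℝ)) hPint.integrableOn hPint.integrableOn
  rw [hIic, hfull] at hsplit
  linarith
end

section
/- For all σ > 0 and x, y > 0, the partial derivative of the absorbed heat kernel with respect to time satisfies the pointwise bound |∂_σ κ(σ,y,x)| ≤ exp(-(y-x)²/(2σ) - (y-x) - σ/2)/(2√(2πσ⁵)) · (σ(1+σ) + (y-x)² + 2σ/e). -/
open Real MeasureTheory Set Filter Topology

theorem kap_time_deriv_bound (σ x y : ℝ) (hσ : 0 < σ) (hx : 0 < x) (hy : 0 < y) :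
    |deriv (fun s => kap s y x) σ| ≤
      Real.exp (-(y-x)^2/(2*σ) - (y-x) - σ/2) / (2 * Real.sqrt (2*Real.pi*σ^5)) *
        (σ*(1+σ) + (y-x)^2 + 2*σ/Real.exp 1) := by
  have hS : 0 < Real.sqrt (2*Real.pi*σ) := Real.sqrt_pos.2 (by positivity)
  have hSsq : Real.sqrt (2*Real.pi*σ) ^ 2 = 2*Real.pi*σ := Real.sq_sqrt (by positivity)
  have hD : HasDerivAt (fun s => kap s y x)
      (Real.exp (-(y - x + σ)^2/(2*σ)) / Real.sqrt (2*Real.pi*σ) *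
        (((y-x)^2/(2*σ^2) - 1/2 - 1/(2*σ)) * (1 - Real.exp (-(2*x*y)/σ))
          - Real.exp (-(2*x*y)/σ) * (2*x*y/σ^2))) σ := by
    have h1 : HasDerivAt (fun s : ℝ => -(y - x + s)^2) (-(2*(y-x+σ))) σ := by
      have := (((hasDerivAt_id σ).const_add (y-x)).pow 2).neg
      refine this.congr_deriv ?_
      simp [id]
    have h2 : HasDerivAt (fun s : ℝ => 2*s) 2 σ := by
      simpa using (hasDerivAt_id σ).const_mul 2
    have hu : HasDerivAt (fun s : ℝ => -(y - x + s)^2/(2*s))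
        ((y-x)^2/(2*σ^2) - 1/2) σ := by
      have := h1.div h2 (by positivity)
      refine this.congr_deriv ?_
      field_simp
      ring
    have hE : HasDerivAt (fun s : ℝ => Real.exp (-(y - x + s)^2/(2*s)))
        (Real.exp (-(y - x + σ)^2/(2*σ)) * ((y-x)^2/(2*σ^2) - 1/2)) σ := hu.exp
    have hSq : HasDerivAt (fun s : ℝ => Real.sqrt (2*Real.pi*s))
        (Real.pi / Real.sqrt (2*Real.pi*σ)) σ := by
      have hin : HasDerivAt (fun s : ℝ => 2*Real.pi*s) (2*Real.pi) σ := by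
        simpa using (hasDerivAt_id σ).const_mul (2*Real.pi)
      have := (Real.hasDerivAt_sqrt (show (2*Real.pi*σ) ≠ 0 by positivity)).comp σ hin
      refine this.congr_deriv ?_
      field_simp
    have hQ : HasDerivAt (fun s : ℝ => Real.exp (-(2*x*y)/s))
        (Real.exp (-(2*x*y)/σ) * (2*x*y/σ^2)) σ := by
      have hin : HasDerivAt (fun s : ℝ => -(2*x*y)/s) (2*x*y/σ^2) σ := by
        have := (hasDerivAt_const σ (-(2*x*y))).div (hasDerivAt_id σ) hσ.ne'
        refine this.congr_deriv ?_
        simp [id]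
      exact hin.exp
    have hh : HasDerivAt (fun s : ℝ => 1 - Real.exp (-(2*x*y)/s))
        (-(Real.exp (-(2*x*y)/σ) * (2*x*y/σ^2))) σ := hQ.const_sub 1
    have := (hE.div hSq hS.ne').mul hh
    unfold kap
    refine this.congr_deriv ?_
    simp only [Pi.div_apply]
    set S := Real.sqrt (2*Real.pi*σ) with hSdef
    set E := Real.exp (-(y - x + σ)^2/(2*σ))
    set Q := Real.exp (-(2*x*y)/σ)
    have h4 : S^4 = (2*Real.pi*σ)^2 := by rw [← hSsq]; ring
    field_simp
    ring_nf
    rw [hSsq]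
    ring
  rw [hD.deriv]
  set S := Real.sqrt (2*Real.pi*σ) with hSdef
  set E := Real.exp (-(y - x + σ)^2/(2*σ)) with hEdef
  set Q := Real.exp (-(2*x*y)/σ) with hQdef
  have hE0 : 0 < E := Real.exp_pos _
  have hQ0 : 0 < Q := Real.exp_pos _
  have hQ1 : Q ≤ 1 := by
    rw [hQdef]
    apply Real.exp_le_one_iff.2
    rw [neg_div, neg_nonpos]
    positivity
  -- key: Q * (2*x*y/σ) ≤ exp(-1)
  have hkey : Q * (2*x*y/σ) ≤ Real.exp (-1) := by
    set t := 2*x*y/σ with ht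
    have ht0 : 0 < t := by positivity
    have hQt : Q = Real.exp (-t) := by rw [hQdef, ht, neg_div]
    have h1 : t ≤ Real.exp (t - 1) := by
      have := Real.add_one_le_exp (t - 1)
      linarith
    calc Q * t = Real.exp (-t) * t := by rw [hQt]
      _ ≤ Real.exp (-t) * Real.exp (t-1) :=
          mul_le_mul_of_nonneg_left h1 (Real.exp_pos _).le
      _ = Real.exp (-1) := by rw [← Real.exp_add]; ring_nf
  have hEeq : Real.exp (-(y-x)^2/(2*σ) - (y-x) - σ/2) = E := by
    rw [hEdef]
    congr 1
    field_simp
    ring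
  have hS5 : Real.sqrt (2*Real.pi*σ^5) = σ^2 * S := by
    rw [hSdef, show 2*Real.pi*σ^5 = (2*Real.pi*σ) * (σ^2)^2 by ring,
      Real.sqrt_mul (by positivity), Real.sqrt_sq (by positivity)]
    ring
  rw [hEeq, hS5, abs_mul, abs_div, abs_of_pos hE0, abs_of_pos hS]
  clear_value S E Q
  clear hD hEeq hS5 hSdef hEdef hQdef hSsq
  have hX : |((y-x)^2/(2*σ^2) - 1/2 - 1/(2*σ)) * (1 - Q) - Q * (2*x*y/σ^2)|
      ≤ (y-x)^2/(2*σ^2) + 1/2 + 1/(2*σ) + 1/(Real.exp 1 * σ) := by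
    have h1 : |((y-x)^2/(2*σ^2) - 1/2 - 1/(2*σ)) * (1 - Q)|
        ≤ (y-x)^2/(2*σ^2) + 1/2 + 1/(2*σ) := by
      rw [abs_mul]
      have hA : |(y-x)^2/(2*σ^2) - 1/2 - 1/(2*σ)| ≤ (y-x)^2/(2*σ^2) + 1/2 + 1/(2*σ) := by
        have h2 : (0:ℝ) ≤ (y-x)^2/(2*σ^2) := by positivity
        have h3 : (0:ℝ) ≤ 1/(2*σ) := by positivity
        rw [abs_le]
        constructor <;> linarith
      have hB : |1 - Q| ≤ 1 := by
        rw [abs_le]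
        constructor <;> linarith
      calc |(y-x)^2/(2*σ^2) - 1/2 - 1/(2*σ)| * |1 - Q|
          ≤ ((y-x)^2/(2*σ^2) + 1/2 + 1/(2*σ)) * 1 :=
            mul_le_mul hA hB (abs_nonneg _) (by positivity)
        _ = (y-x)^2/(2*σ^2) + 1/2 + 1/(2*σ) := by ring
    have h2 : |Q * (2*x*y/σ^2)| ≤ 1/(Real.exp 1 * σ) := by
      rw [abs_of_pos (by positivity)]
      have heq : Q * (2*x*y/σ^2) = (Q * (2*x*y/σ)) / σ := by
        field_simp
      rw [heq, div_le_iff₀ hσ]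
      have heq2 : 1/(Real.exp 1 * σ) * σ = Real.exp (-1) := by
        rw [Real.exp_neg]
        field_simp
      rw [heq2]
      exact hkey
    have htri : |((y-x)^2/(2*σ^2) - 1/2 - 1/(2*σ)) * (1 - Q) - Q * (2*x*y/σ^2)|
        ≤ |((y-x)^2/(2*σ^2) - 1/2 - 1/(2*σ)) * (1 - Q)| + |Q * (2*x*y/σ^2)| := by
      rw [sub_eq_add_neg]
      exact (abs_add_le _ _).trans_eq (by rw [abs_neg])
    linarith
  have hfinal : E / S * ((y-x)^2/(2*σ^2) + 1/2 + 1/(2*σ) + 1/(Real.exp 1 * σ))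
      = E / (2 * (σ^2 * S)) * (σ*(1+σ) + (y-x)^2 + 2*σ/Real.exp 1) := by
    have he : Real.exp 1 ≠ 0 := (Real.exp_pos 1).ne'
    field_simp
    ring
  exact le_trans (mul_le_mul_of_nonneg_left hX (by positivity)) (le_of_eq hfinal)
end

section
/- For every x > 0 and u > 0, the Laplace transform of the first-passage density is ∫_0^∞ h(σ,x)·e^{-uσ} dσ = exp(x(1 - √(1 + 2u))). -/
open Real MeasureTheory Set Filter Topology

namespace FphAux

noncomputable def A (z : ℝ) : ℝ := ∫ t in Set.Ioi z, Real.exp (-t^2)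

lemma intg : Integrable (fun t : ℝ => Real.exp (-t^2)) := by
  simpa using integrable_exp_neg_mul_sq (b := (1:ℝ)) one_pos

lemma A_eq (z : ℝ) : A z = A 0 - ∫ t in (0:ℝ)..z, Real.exp (-t^2) := by
  have h1 := intg
  have e1 := intervalIntegral.integral_Iic_add_Ioi (μ := volume) (b := z)
    h1.integrableOn h1.integrableOn
  have e2 := intervalIntegral.integral_Iic_add_Ioi (μ := volume) (b := (0:ℝ))
    h1.integrableOn h1.integrableOn
  have e3 := intervalIntegral.integral_Iic_sub_Iic (μ := volume) (a := (0:ℝ)) (b := z)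
    h1.integrableOn h1.integrableOn
  simp only [A]
  linarith [e1, e2, e3]

lemma hasDerivAt_A (z : ℝ) : HasDerivAt A (-Real.exp (-z^2)) z := by
  have hc : Continuous (fun t : ℝ => Real.exp (-t^2)) := by continuity
  have h : HasDerivAt (fun y => ∫ t in (0:ℝ)..y, Real.exp (-t^2)) (Real.exp (-z^2)) z :=
    intervalIntegral.integral_hasDerivAt_right intg.intervalIntegrable
      hc.stronglyMeasurable.stronglyMeasurableAtFilter hc.continuousAt
  have h2 := h.const_sub (A 0)
  have : A = fun y => A 0 - ∫ t in (0:ℝ)..y, Real.exp (-t^2) := funext A_eq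
  rw [this]
  exact h2

lemma A0 : A 0 = Real.sqrt π / 2 := by
  have := integral_gaussian_Ioi (1:ℝ)
  simpa [A] using this

lemma tendsto_A_atTop : Tendsto A atTop (𝓝 0) := by
  have h := MeasureTheory.intervalIntegral_tendsto_integral_Ioi (0:ℝ)
    (intg.integrableOn) tendsto_id
  have h2 : Tendsto (fun z => A 0 - ∫ t in (0:ℝ)..z, Real.exp (-t^2)) atTop
      (𝓝 (A 0 - A 0)) := tendsto_const_nhds.sub h
  simp only [sub_self] at h2
  exact h2.congr (fun z => (A_eq z).symm)

lemma Iic0 : (∫ t in Set.Iic (0:ℝ), Real.exp (-t^2)) = Real.sqrt π / 2 := by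
  have e2 := intervalIntegral.integral_Iic_add_Ioi (μ := volume) (b := (0:ℝ))
    (f := fun t : ℝ => Real.exp (-t^2)) intg.integrableOn intg.integrableOn
  have hg : (∫ t : ℝ, Real.exp (-t^2)) = Real.sqrt π := by
    simpa using integral_gaussian (1:ℝ)
  have := A0
  simp only [A] at this
  linarith

lemma tendsto_A_atBot : Tendsto A atBot (𝓝 (Real.sqrt π)) := by
  have h := MeasureTheory.intervalIntegral_tendsto_integral_Iic (0:ℝ)
    (f := fun t : ℝ => Real.exp (-t^2)) intg.integrableOn tendsto_id
  have h2 : Tendsto (fun z => A 0 + ∫ t in z..(0:ℝ), Real.exp (-t^2)) atBot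
      (𝓝 (A 0 + Real.sqrt π / 2)) := by
    rw [← Iic0]; exact tendsto_const_nhds.add h
  have h3 : ∀ z, A z = A 0 + ∫ t in z..(0:ℝ), Real.exp (-t^2) := by
    intro z; rw [A_eq z, intervalIntegral.integral_symm]; ring
  rw [show Real.sqrt π = A 0 + Real.sqrt π / 2 by rw [A0]; ring]
  exact h2.congr (fun z => (h3 z).symm)

lemma tendsto_sqrt2s : Tendsto (fun σ : ℝ => Real.sqrt (2*σ)) atTop atTop := by
  refine tendsto_atTop_atTop.2 fun b => ⟨max (b^2/2) 0, fun σ hσ => ?_⟩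
  have h1 : b^2 ≤ 2*σ := by
    have := le_trans (le_max_left (b^2/2) 0) hσ; linarith
  calc b ≤ |b| := le_abs_self b
    _ = Real.sqrt (b^2) := (Real.sqrt_sq_eq_abs b).symm
    _ ≤ Real.sqrt (2*σ) := Real.sqrt_le_sqrt h1

lemma sqrt_pi_ne : Real.sqrt π ≠ 0 := (Real.sqrt_pos.2 pi_pos).ne'

lemma sqrt_fact {σ : ℝ} (hσ : 0 < σ) :
    Real.sqrt (2*π*σ^3) = Real.sqrt π * Real.sqrt (2*σ) * σ := by
  rw [show 2*π*σ^3 = π * ((2*σ) * σ^2) by ring, Real.sqrt_mul Real.pi_pos.le,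
    Real.sqrt_mul (by linarith : (0:ℝ) ≤ 2*σ), Real.sqrt_sq hσ.le, mul_assoc]

lemma deriv_F (x a : ℝ) {σ : ℝ} (hσ : 0 < σ) :
    HasDerivAt (fun σ => (A ((x - a*σ)/Real.sqrt (2*σ)) +
        Real.exp (2*a*x) * A ((x + a*σ)/Real.sqrt (2*σ))) / Real.sqrt π)
      (x * Real.exp (-(x - a*σ)^2/(2*σ)) / Real.sqrt (2*π*σ^3)) σ := by
  have hs0 : 0 < Real.sqrt (2*σ) := Real.sqrt_pos.2 (by linarith)
  set s := Real.sqrt (2*σ) with hs_def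
  have hs2 : s^2 = 2*σ := Real.sq_sqrt (by linarith)
  have h2σ : HasDerivAt (fun σ : ℝ => 2*σ) 2 σ := by
    simpa using (hasDerivAt_id σ).const_mul 2
  have hs : HasDerivAt (fun σ : ℝ => Real.sqrt (2*σ)) (1/(2*s)*2) σ :=
    (Real.hasDerivAt_sqrt (by positivity)).comp σ h2σ
  have hnum1 : HasDerivAt (fun σ : ℝ => x - a*σ) (-a) σ := by
    simpa using ((hasDerivAt_id σ).const_mul a).const_sub x
  have hnum2 : HasDerivAt (fun σ : ℝ => x + a*σ) a σ := by
    simpa using ((hasDerivAt_id σ).const_mul a).const_add x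
  have hw1 := hnum1.div hs hs0.ne'
  have hw2 := hnum2.div hs hs0.ne'
  have hA1 := (hasDerivAt_A ((x - a*σ)/s)).comp σ hw1
  have hA2 := ((hasDerivAt_A ((x + a*σ)/s)).comp σ hw2).const_mul (Real.exp (2*a*x))
  have hF := (hA1.add hA2).div_const (Real.sqrt π)
  convert hF using 1
  case e'_4 => rfl
  case e'_5 => rfl
  case e'_8 => rfl
  have hE1 : Real.exp (-((x - a*σ)/s)^2) = Real.exp (-(x - a*σ)^2/(2*σ)) := by
    rw [div_pow, hs2]; ring_nf
  have hE2 : Real.exp (-((x + a*σ)/s)^2)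
      = Real.exp (-(x - a*σ)^2/(2*σ)) * Real.exp (-(2*a*x)) := by
    rw [← Real.exp_add]; congr 1; rw [div_pow, hs2]; field_simp; ring
  set E := Real.exp (-(x - a*σ)^2/(2*σ)) with hE_def
  have hE : 0 < E := Real.exp_pos _
  have he2 : (0:ℝ) < Real.exp (2*a*x) := Real.exp_pos _
  have hE2'' : Real.exp (-((x + a*σ)/s)^2) = E / Real.exp (2*a*x) := by
    rw [hE2, Real.exp_neg]; ring
  rw [hE1, hE2'', sqrt_fact hσ]
  simp only [← hs_def]
  field_simp
  linear_combination x * hs2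

lemma w1_top (x a : ℝ) (ha : 0 < a) :
    Tendsto (fun σ => (x - a*σ)/Real.sqrt (2*σ)) atTop atBot := by
  have h1 : Tendsto (fun σ : ℝ => x/Real.sqrt (2*σ)) atTop (𝓝 0) :=
    tendsto_const_nhds.div_atTop tendsto_sqrt2s
  have h2 : Tendsto (fun σ : ℝ => a*Real.sqrt (2*σ)/2) atTop atTop :=
    (tendsto_sqrt2s.const_mul_atTop ha).atTop_div_const two_pos
  have h3 : Tendsto (fun σ : ℝ => x/Real.sqrt (2*σ) + -(a*Real.sqrt (2*σ)/2)) atTop atBot :=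
    h1.add_atBot (tendsto_neg_atTop_atBot.comp h2)
  apply h3.congr'
  filter_upwards [eventually_gt_atTop (0:ℝ)] with σ hσ
  have hs0 : 0 < Real.sqrt (2*σ) := Real.sqrt_pos.2 (by linarith)
  have hs2 : Real.sqrt (2*σ)^2 = 2*σ := Real.sq_sqrt (by linarith)
  rw [eq_div_iff hs0.ne', add_mul, div_mul_cancel₀ _ hs0.ne']
  linear_combination (-a/2) * hs2

lemma w2_top (x a : ℝ) (ha : 0 < a) :
    Tendsto (fun σ => (x + a*σ)/Real.sqrt (2*σ)) atTop atTop := by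
  have h1 : Tendsto (fun σ : ℝ => x/Real.sqrt (2*σ)) atTop (𝓝 0) :=
    tendsto_const_nhds.div_atTop tendsto_sqrt2s
  have h2 : Tendsto (fun σ : ℝ => a*Real.sqrt (2*σ)/2) atTop atTop :=
    (tendsto_sqrt2s.const_mul_atTop ha).atTop_div_const two_pos
  have h3 : Tendsto (fun σ : ℝ => x/Real.sqrt (2*σ) + a*Real.sqrt (2*σ)/2) atTop atTop :=
    h1.add_atTop h2
  apply h3.congr'
  filter_upwards [eventually_gt_atTop (0:ℝ)] with σ hσ
  have hs0 : 0 < Real.sqrt (2*σ) := Real.sqrt_pos.2 (by linarith)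
  have hs2 : Real.sqrt (2*σ)^2 = 2*σ := Real.sq_sqrt (by linarith)
  rw [eq_div_iff hs0.ne', add_mul, div_mul_cancel₀ _ hs0.ne']
  linear_combination (a/2) * hs2

lemma sqrt_zero_right : Tendsto (fun σ : ℝ => Real.sqrt (2*σ)) (𝓝[>] (0:ℝ)) (𝓝[>] 0) := by
  apply tendsto_nhdsWithin_of_tendsto_nhds_of_eventually_within
  · have h : Tendsto (fun σ : ℝ => (2:ℝ)*σ) (𝓝[>] (0:ℝ)) (𝓝 0) := by
      have hc : Continuous (fun σ : ℝ => (2:ℝ)*σ) := continuous_const.mul continuous_id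
      have := hc.tendsto (0:ℝ)
      simpa using this.mono_left nhdsWithin_le_nhds
    simpa using h.sqrt
  · filter_upwards [self_mem_nhdsWithin] with σ hσ
    exact Real.sqrt_pos.2 (by linarith [mem_Ioi.1 hσ])

lemma w_zero (x : ℝ) (hx : 0 < x) (sign : ℝ) :
    Tendsto (fun σ => (x + sign*σ)/Real.sqrt (2*σ)) (𝓝[>] (0:ℝ)) atTop := by
  have hinv : Tendsto (fun σ : ℝ => (Real.sqrt (2*σ))⁻¹) (𝓝[>] (0:ℝ)) atTop :=
    sqrt_zero_right.inv_tendsto_nhdsGT_zero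
  have hnum : Tendsto (fun σ : ℝ => x + sign*σ) (𝓝[>] (0:ℝ)) (𝓝 x) := by
    have hc : Continuous (fun σ : ℝ => x + sign*σ) :=
      continuous_const.add (continuous_const.mul continuous_id)
    have : Tendsto (fun σ : ℝ => x + sign*σ) (𝓝 (0:ℝ)) (𝓝 (x + sign*0)) := hc.tendsto 0
    simpa using this.mono_left nhdsWithin_le_nhds
  have := hnum.pos_mul_atTop hx hinv
  exact this.congr (fun σ => (div_eq_mul_inv _ _).symm)

end FphAux

open FphAux in
theorem fph_laplace_transform (x u : ℝ) (hx : 0 < x) (hu : 0 < u) :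
    (∫ σ in Set.Ioi (0:ℝ), fph σ x * Real.exp (-u*σ)) =
      Real.exp (x * (1 - Real.sqrt (1 + 2*u))) := by
  have h12u : (0:ℝ) ≤ 1 + 2*u := by linarith
  set a := Real.sqrt (1 + 2*u) with ha_def
  have ha2 : a^2 = 1 + 2*u := Real.sq_sqrt h12u
  have ha : 0 < a := Real.sqrt_pos.2 (by linarith)
  set G : ℝ → ℝ := fun σ => if σ ≤ 0 then 0 else
    (A ((x - a*σ)/Real.sqrt (2*σ)) +
      Real.exp (2*a*x) * A ((x + a*σ)/Real.sqrt (2*σ))) / Real.sqrt π with hG_def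
  set g : ℝ → ℝ := fun σ => x * Real.exp (-(x - a*σ)^2/(2*σ)) / Real.sqrt (2*π*σ^3)
    with hg_def
  have hderiv : ∀ σ ∈ Ioi (0:ℝ), HasDerivAt G (g σ) σ := by
    intro σ hσ
    apply (deriv_F x a hσ).congr_of_eventuallyEq
    filter_upwards [Ioi_mem_nhds hσ] with τ hτ
    simp only [hG_def, if_neg (not_le.2 (mem_Ioi.1 hτ))]
  have hpos : ∀ σ ∈ Ioi (0:ℝ), 0 ≤ g σ := by
    intro σ hσ
    have : (0:ℝ) ≤ Real.sqrt (2*π*σ^3) := Real.sqrt_nonneg _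
    positivity
  have hGtop : Tendsto G atTop (𝓝 1) := by
    have h := ((tendsto_A_atBot.comp (w1_top x a ha)).add
      ((tendsto_A_atTop.comp (w2_top x a ha)).const_mul (Real.exp (2*a*x)))).div_const
        (Real.sqrt π)
    have hval : (Real.sqrt π + Real.exp (2*a*x) * 0) / Real.sqrt π = 1 := by
      field_simp
      simp
    rw [hval] at h
    apply h.congr'
    filter_upwards [eventually_gt_atTop (0:ℝ)] with σ hσ
    simp only [hG_def, if_neg (not_le.2 hσ), Function.comp]
  have hw10 : Tendsto (fun σ => (x - a*σ)/Real.sqrt (2*σ)) (𝓝[>] (0:ℝ)) atTop := by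
    have := w_zero x hx (-a)
    apply this.congr
    intro σ; ring_nf
  have hw20 : Tendsto (fun σ => (x + a*σ)/Real.sqrt (2*σ)) (𝓝[>] (0:ℝ)) atTop :=
    w_zero x hx a
  have hG0 : G 0 = 0 := by simp [hG_def]
  have hcont : ContinuousWithinAt G (Ici (0:ℝ)) 0 := by
    rw [← continuousWithinAt_Ioi_iff_Ici]
    have h := ((tendsto_A_atTop.comp hw10).add
      ((tendsto_A_atTop.comp hw20).const_mul (Real.exp (2*a*x)))).div_const (Real.sqrt π)
    have hval : ((0:ℝ) + Real.exp (2*a*x) * 0) / Real.sqrt π = 0 := by simp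
    rw [hval] at h
    have h2 : Tendsto G (𝓝[>] (0:ℝ)) (𝓝 0) := by
      apply h.congr'
      filter_upwards [self_mem_nhdsWithin] with σ hσ
      simp only [hG_def, if_neg (not_le.2 (mem_Ioi.1 hσ)), Function.comp]
    unfold ContinuousWithinAt
    rw [hG0]
    exact h2
  have key : (∫ σ in Ioi (0:ℝ), g σ) = 1 := by
    have := integral_Ioi_of_hasDerivAt_of_nonneg hcont hderiv hpos hGtop
    rw [this, hG0, sub_zero]
  have hpt : ∀ σ ∈ Ioi (0:ℝ), fph σ x * Real.exp (-u*σ)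
      = Real.exp (x*(1-a)) * g σ := by
    intro σ hσ
    have hσ0 : (0:ℝ) < σ := mem_Ioi.1 hσ
    have hexp : Real.exp (-(x - σ)^2/(2*σ)) * Real.exp (-u*σ)
        = Real.exp (x*(1-a)) * Real.exp (-(x - a*σ)^2/(2*σ)) := by
      rw [← Real.exp_add, ← Real.exp_add]
      congr 1
      field_simp
      linear_combination (σ^2) * ha2
    simp only [fph, hg_def]
    linear_combination (x / Real.sqrt (2*π*σ^3)) * hexp
  calc (∫ σ in Ioi (0:ℝ), fph σ x * Real.exp (-u*σ))
      = ∫ σ in Ioi (0:ℝ), Real.exp (x*(1-a)) * g σ :=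
        setIntegral_congr_fun measurableSet_Ioi hpt
    _ = Real.exp (x*(1-a)) * ∫ σ in Ioi (0:ℝ), g σ := by
        rw [MeasureTheory.integral_const_mul]
    _ = Real.exp (x*(1-a)) := by rw [key, mul_one]
end

section
/- For every Λ > 0 there exists σ† > 0 such that σ ↦ h(σ,Λ) is strictly convex on (0, σ†), h(σ,Λ) → 0 as σ → 0⁺, and h is strictly increasing on (0, σ†); moreover σ† can be chosen with σ† < σ* = (-3 + √(9 + 4Λ²))/2. -/
open Real MeasureTheory Set Filter Topology

/-- log-scale version of `fph · Λ`. -/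
noncomputable def fphV (Λ σ : ℝ) : ℝ :=
  -Λ^2/2 * σ⁻¹ + Λ - σ/2 - 3/2 * Real.log σ

noncomputable def fphG (Λ σ : ℝ) : ℝ :=
  Λ / Real.sqrt (2*Real.pi) * Real.exp (fphV Λ σ)

noncomputable def fphM (Λ σ : ℝ) : ℝ := (Λ^2 - σ^2 - 3*σ)/(2*σ^2)

noncomputable def fphP (Λ σ : ℝ) : ℝ := (3*σ - 2*Λ^2)/(2*σ^3)

lemma fph_eq_G {Λ σ : ℝ} (hσ : 0 < σ) : fph σ Λ = fphG Λ σ := by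
  have h2π : (0:ℝ) < 2 * Real.pi := by positivity
  have hσ3 : (0:ℝ) < σ^3 := by positivity
  have hsqrt : Real.sqrt (2*Real.pi*σ^3)
      = Real.sqrt (2*Real.pi) * Real.exp (3/2 * Real.log σ) := by
    rw [Real.sqrt_mul h2π.le, Real.sqrt_eq_rpow (σ^3), Real.rpow_def_of_pos hσ3,
      Real.log_pow]
    ring_nf
  have hexp : Real.exp (-(Λ - σ)^2 / (2*σ)) / Real.exp (3/2 * Real.log σ)
      = Real.exp (fphV Λ σ) := by
    rw [← Real.exp_sub]
    congr 1
    rw [fphV]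
    field_simp
    ring
  rw [fph, fphG, hsqrt, ← hexp]
  have h1 : Real.sqrt (2*Real.pi) > 0 := Real.sqrt_pos.mpr h2π
  field_simp

lemma hasDerivAt_V {Λ σ : ℝ} (hσ : 0 < σ) : HasDerivAt (fphV Λ) (fphM Λ σ) σ := by
  have h1 : HasDerivAt (fun σ : ℝ => σ⁻¹) (-(σ^2)⁻¹) σ := hasDerivAt_inv hσ.ne'
  have h2 : HasDerivAt Real.log σ⁻¹ σ := Real.hasDerivAt_log hσ.ne'
  have h : HasDerivAt (fphV Λ)
      (-Λ^2/2 * (-(σ^2)⁻¹) - 1/2 - 3/2 * σ⁻¹) σ := by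
    have := (((h1.const_mul (-Λ^2/2)).add_const Λ).sub
      ((hasDerivAt_id σ).div_const 2)).sub (h2.const_mul (3/2))
    exact this.congr_deriv (by ring)
  convert h using 1
  rw [fphM]
  field_simp

lemma hasDerivAt_G {Λ σ : ℝ} (hσ : 0 < σ) :
    HasDerivAt (fphG Λ) (fphG Λ σ * fphM Λ σ) σ := by
  have := ((hasDerivAt_V (Λ := Λ) hσ).exp).const_mul (Λ / Real.sqrt (2*Real.pi))
  refine this.congr_deriv ?_
  rw [fphG]; ring

lemma hasDerivAt_M {Λ σ : ℝ} (hσ : 0 < σ) : HasDerivAt (fphM Λ) (fphP Λ σ) σ := by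
  have hnum : HasDerivAt (fun σ : ℝ => Λ^2 - σ^2 - 3*σ) (0 - 2*σ - 3) σ := by
    have h1 : HasDerivAt (fun σ : ℝ => σ^2) (2*σ) σ := by
      simpa using hasDerivAt_pow 2 σ
    exact (((hasDerivAt_const σ (Λ^2)).sub h1).sub ((hasDerivAt_id σ).const_mul 3)).congr_deriv (by ring)
  have hden : HasDerivAt (fun σ : ℝ => 2*σ^2) (2*(2*σ)) σ := by
    have h1 : HasDerivAt (fun σ : ℝ => σ^2) (2*σ) σ := by
      simpa using hasDerivAt_pow 2 σ
    exact h1.const_mul 2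
  have hd : (2*σ^2) ≠ 0 := by positivity
  have := hnum.div hden hd
  refine this.congr_deriv ?_
  rw [fphP]
  field_simp
  ring

lemma hasDerivAt_W {Λ σ : ℝ} (hσ : 0 < σ) :
    HasDerivAt (fun σ => fphG Λ σ * fphM Λ σ)
      (fphG Λ σ * (fphM Λ σ^2 + fphP Λ σ)) σ := by
  have := (hasDerivAt_G (Λ := Λ) hσ).mul (hasDerivAt_M (Λ := Λ) hσ)
  refine this.congr_deriv ?_
  ring

theorem fph_convex_increasing_near_zero (Λ : ℝ) (hΛ : 0 < Λ) :
    ∃ σd : ℝ, 0 < σd ∧ σd < (-3 + Real.sqrt (9 + 4*Λ^2))/2 ∧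
      StrictConvexOn ℝ (Set.Ioo 0 σd) (fun σ => fph σ Λ) ∧
      Filter.Tendsto (fun σ => fph σ Λ) (nhdsWithin 0 (Set.Ioi 0)) (nhds 0) ∧
      StrictMonoOn (fun σ => fph σ Λ) (Set.Ioo 0 σd) := by
  set t₀ : ℝ := (-3 + Real.sqrt (9 + 2*Λ^2))/2 with ht₀def
  set σd : ℝ := min t₀ (Λ^2/17) with hσddef
  have hs3 : (3:ℝ) < Real.sqrt (9 + 2*Λ^2) := by
    rw [show (3:ℝ) = Real.sqrt 9 by
      rw [show (9:ℝ) = 3^2 by norm_num, Real.sqrt_sq (by norm_num)]]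
    exact Real.sqrt_lt_sqrt (by norm_num) (by nlinarith)
  have ht₀pos : 0 < t₀ := by rw [ht₀def]; linarith
  have hσdpos : 0 < σd := lt_min ht₀pos (by positivity)
  -- t₀ satisfies t₀^2 + 3 t₀ = Λ^2/2
  have ht₀eq : t₀^2 + 3*t₀ = Λ^2/2 := by
    have h : (2*t₀ + 3)^2 = 9 + 2*Λ^2 := by
      rw [ht₀def]
      have := Real.sq_sqrt (show (0:ℝ) ≤ 9 + 2*Λ^2 by positivity)
      nlinarith [this]
    nlinarith
  -- key bound on Ioo 0 σd
  have hkey : ∀ σ ∈ Set.Ioo (0:ℝ) σd, Λ^2/2 ≤ Λ^2 - σ^2 - 3*σ ∧ σ < Λ^2/17 := by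
    intro σ hσ
    obtain ⟨h0, h1⟩ := hσ
    have hlt1 : σ < t₀ := lt_of_lt_of_le h1 (min_le_left _ _)
    have hlt2 : σ < Λ^2/17 := lt_of_lt_of_le h1 (min_le_right _ _)
    constructor
    · nlinarith
    · exact hlt2
  -- σd < σ*
  have hσdlt : σd < (-3 + Real.sqrt (9 + 4*Λ^2))/2 := by
    have : Real.sqrt (9 + 2*Λ^2) < Real.sqrt (9 + 4*Λ^2) :=
      Real.sqrt_lt_sqrt (by positivity) (by nlinarith)
    calc σd ≤ t₀ := min_le_left _ _
    _ < _ := by rw [ht₀def]; linarith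
  have hGpos : ∀ σ : ℝ, 0 < fphG Λ σ := fun σ => by
    rw [fphG]
    positivity
  have hMpos : ∀ σ ∈ Set.Ioo (0:ℝ) σd, 0 < fphM Λ σ := by
    intro σ hσ
    obtain ⟨hb, _⟩ := hkey σ hσ
    rw [fphM]
    have h0 := hσ.1
    have hnum : 0 < Λ^2 - σ^2 - 3*σ := lt_of_lt_of_le (by positivity) hb
    positivity
  -- pointwise equality and derivatives
  have hFG : Set.EqOn (fun σ => fph σ Λ) (fphG Λ) (Set.Ioi 0) := fun σ hσ => fph_eq_G hσ
  have contF : ContinuousOn (fun σ => fph σ Λ) (Set.Ioo 0 σd) := by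
    have contG : ContinuousOn (fphG Λ) (Set.Ioo 0 σd) := fun x hx =>
      ((hasDerivAt_G (Λ := Λ) hx.1).continuousAt).continuousWithinAt
    exact contG.congr fun x hx => hFG hx.1
  have derivF_eq : ∀ x ∈ Set.Ioi (0:ℝ),
      deriv (fun σ => fph σ Λ) x = fphG Λ x * fphM Λ x := by
    intro x hx
    have hev : (fun σ => fph σ Λ) =ᶠ[nhds x] fphG Λ := by
      filter_upwards [isOpen_Ioi.mem_nhds hx] with y hy using fph_eq_G hy
    rw [hev.deriv_eq, (hasDerivAt_G hx).deriv]
  have deriv2_eq : ∀ x ∈ Set.Ioi (0:ℝ),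
      deriv (deriv (fun σ => fph σ Λ)) x = fphG Λ x * (fphM Λ x^2 + fphP Λ x) := by
    intro x hx
    have hev : deriv (fun σ => fph σ Λ) =ᶠ[nhds x] (fun σ => fphG Λ σ * fphM Λ σ) := by
      filter_upwards [isOpen_Ioi.mem_nhds hx] with y hy using derivF_eq y hy
    rw [hev.deriv_eq, (hasDerivAt_W hx).deriv]
  refine ⟨σd, hσdpos, hσdlt, ?_, ?_, ?_⟩
  · -- strict convexity
    apply strictConvexOn_of_deriv2_pos (convex_Ioo 0 σd) contF
    intro x hx
    rw [interior_Ioo] at hx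
    have hx0 : 0 < x := hx.1
    obtain ⟨hb, hc⟩ := hkey x hx
    have h2 : deriv^[2] (fun σ => fph σ Λ) = deriv (deriv (fun σ => fph σ Λ)) := rfl
    rw [h2, deriv2_eq x hx0]
    have hsum : 0 < fphM Λ x^2 + fphP Λ x := by
      have he : fphM Λ x^2 + fphP Λ x
          = ((Λ^2 - x^2 - 3*x)^2 + 2*x*(3*x - 2*Λ^2))/(4*x^4) := by
        rw [fphM, fphP]
        field_simp
        ring
      rw [he]
      apply div_pos ?_ (by positivity)
      have hb2 : (Λ^2/2)^2 ≤ (Λ^2 - x^2 - 3*x)^2 := by nlinarith [sq_nonneg Λ]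
      nlinarith [sq_nonneg Λ, sq_nonneg x, hΛ]
    exact mul_pos (hGpos x) hsum
  · -- tendsto 0
    have hid : Tendsto (fun σ : ℝ => σ) (nhdsWithin 0 (Set.Ioi 0)) (nhds 0) :=
      tendsto_id.mono_left nhdsWithin_le_nhds
    have hxlog : Tendsto (fun σ : ℝ => σ * Real.log σ)
        (nhdsWithin 0 (Set.Ioi 0)) (nhds 0) := by
      have := tendsto_log_mul_rpow_nhdsGT_zero zero_lt_one
      exact this.congr fun x => by rw [Real.rpow_one, mul_comm]
    have hq : Tendsto (fun σ : ℝ => -Λ^2/2 + Λ*σ - σ^2/2 - 3/2*(σ*Real.log σ))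
        (nhdsWithin 0 (Set.Ioi 0)) (nhds (-Λ^2/2)) := by
      have hc : Tendsto (fun _ : ℝ => -Λ^2/2) (nhdsWithin 0 (Set.Ioi 0))
          (nhds (-Λ^2/2)) := tendsto_const_nhds
      have h1 := ((hc.add (hid.const_mul Λ)).sub
        ((hid.pow 2).div_const 2)).sub (hxlog.const_mul (3/2))
      simpa using h1
    have hv : Tendsto (fphV Λ) (nhdsWithin 0 (Set.Ioi 0)) atBot := by
      have hmul := Filter.Tendsto.atTop_mul_neg
        (show -Λ^2/2 < 0 by nlinarith) tendsto_inv_nhdsGT_zero hq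
      refine hmul.congr' (eventuallyEq_nhdsWithin_of_eqOn fun σ hσ => ?_)
      have hσ0 : (0:ℝ) < σ := hσ
      rw [fphV]
      field_simp
    have hG0 : Tendsto (fphG Λ) (nhdsWithin 0 (Set.Ioi 0)) (nhds 0) := by
      have h := (Real.tendsto_exp_atBot.comp hv).const_mul (Λ / Real.sqrt (2*Real.pi))
      rw [mul_zero] at h
      exact h
    exact hG0.congr' (eventuallyEq_nhdsWithin_of_eqOn fun σ hσ => (fph_eq_G hσ).symm)
  · -- strict monotonicity
    apply strictMonoOn_of_deriv_pos (convex_Ioo 0 σd) contF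
    intro x hx
    rw [interior_Ioo] at hx
    rw [derivF_eq x hx.1]
    exact mul_pos (hGpos x) (hMpos x hx)
end
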